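/- arXiv:0804.1884 — 9 statements merged into one kernel-verified Lean document; each statement's English description precedes it below -/
import Mathlib

section
/- (Lemma 2.1) Suppose |J| ≥ 2 and all T_j > 0. If inf_{j∈J} T_j < 1, then 𝔉_T^+ = ∅, i.e. there is no fixed point concentrated on (0,∞). -/
open MeasureTheory Set Filter

/-- `μ ∈ 𝔉_T`: `μ` is a (distributional) fixed point of the min-type equation
`W =d inf_{j∈J} T_j W_j` for a family of positive weights `T`, expressed via the
survival function `F̄(t) = μ [t, ∞)`. -/
def MemFP {ι : Type*} [Countable ι] (T : ι → ℝ) (μ : Measure ℝ) : Prop :=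
  IsProbabilityMeasure μ ∧
    ∀ t : ℝ, (μ (Ici t)).toReal = ∏' j, (μ (Ici (t / T j))).toReal

/-- `μ ∈ 𝔉_T^+`: a fixed point concentrated on `(0, ∞)`. -/
def MemFPpos {ι : Type*} [Countable ι] (T : ι → ℝ) (μ : Measure ℝ) : Prop :=
  MemFP T μ ∧ μ (Ioi 0) = 1

/-- An infinite product of factors in `[0,1]` is at most any single factor. -/
lemma tprod_le_single {ι : Type*} [DecidableEq ι] (f : ι → ℝ) (h0 : ∀ i, 0 ≤ f i)
    (h1 : ∀ i, f i ≤ 1) (j : ι) : ∏' i, f i ≤ f j := by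
  set g : Finset ι → ℝ := fun s => ∏ i ∈ s, f i with hg
  have hanti : Antitone g := by
    intro s t hst
    have := Finset.prod_sdiff (f := f) hst
    calc g t = (∏ i ∈ t \ s, f i) * ∏ i ∈ s, f i := this.symm
    _ ≤ 1 * ∏ i ∈ s, f i := by
        apply mul_le_mul_of_nonneg_right
        · exact Finset.prod_le_one (fun i _ => h0 i) (fun i _ => h1 i)
        · exact Finset.prod_nonneg (fun i _ => h0 i)
    _ = g s := one_mul _
  have hbdd : BddBelow (range g) := by
    refine ⟨0, ?_⟩
    rintro x ⟨s, rfl⟩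
    exact Finset.prod_nonneg (fun i _ => h0 i)
  have hp : HasProd f (⨅ s : Finset ι, g s) := tendsto_atTop_ciInf hanti hbdd
  rw [hp.tprod_eq]
  calc (⨅ s : Finset ι, g s) ≤ g {j} := ciInf_le hbdd _
  _ = f j := Finset.prod_singleton f j

/-- (Lemma 2.1) If `inf_j T_j < 1` then `𝔉_T^+ = ∅`. -/
theorem stmt4 {ι : Type*} [Countable ι] (T : ι → ℝ)
    (hcard : ∃ j k : ι, j ≠ k) (hT : ∀ j, 0 < T j)
    (hinf : (⨅ j, T j) < 1) :
    ∀ μ : Measure ℝ, ¬ MemFPpos T μ := by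
  rintro μ ⟨⟨hprob, heq⟩, hpos⟩
  haveI := hprob
  haveI := Classical.decEq ι
  haveI : Nonempty ι := ⟨hcard.choose⟩
  -- find j0 with T j0 < 1
  obtain ⟨j0, hj0⟩ : ∃ j, T j < 1 := by
    by_contra h
    push_neg at h
    exact absurd (le_ciInf h) (not_le.2 hinf)
  -- basic facts
  have hle1 : ∀ s : Set ℝ, (μ s).toReal ≤ 1 := by
    intro s
    have : μ s ≤ 1 := prob_le_one
    simpa using ENNReal.toReal_mono ENNReal.one_ne_top this
  have hfin : ∀ s : Set ℝ, μ s ≠ ⊤ := fun s => measure_ne_top μ s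
  -- step: for all t > 0, μ (Ici t) = μ (Ici (t / T j0))
  have hstep : ∀ t : ℝ, 0 < t → μ (Ici t) = μ (Ici (t / T j0)) := by
    intro t ht
    have h1 : (μ (Ici t)).toReal ≤ (μ (Ici (t / T j0))).toReal := by
      rw [heq t]
      exact tprod_le_single _ (fun i => ENNReal.toReal_nonneg) (fun i => hle1 _) j0
    have h2 : μ (Ici (t / T j0)) ≤ μ (Ici t) := by
      apply measure_mono
      apply Ici_subset_Ici.2
      rw [le_div_iff₀ (hT j0)]
      nlinarith
    have h2' : (μ (Ici (t / T j0))).toReal ≤ (μ (Ici t)).toReal :=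
      ENNReal.toReal_mono (hfin _) h2
    have := le_antisymm h1 h2'
    exact ((ENNReal.toReal_eq_toReal_iff' (hfin _) (hfin _)).1 this)
  -- iterate the step
  have hiter : ∀ t : ℝ, 0 < t → ∀ n : ℕ, μ (Ici t) = μ (Ici (t / (T j0) ^ n)) := by
    intro t ht n
    induction n with
    | zero => simp
    | succ n ih =>
      have htn : 0 < t / (T j0) ^ n := div_pos ht (pow_pos (hT j0) n)
      rw [ih, hstep _ htn]
      congr 1
      rw [div_div, ← pow_succ]
  -- μ (Ici m) → 0
  have hInter : (⋂ m : ℕ, Ici (m : ℝ)) = ∅ := by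
    ext x
    simp only [mem_iInter, mem_Ici, mem_empty_iff_false, iff_false, not_forall, not_le]
    obtain ⟨m, hm⟩ := exists_nat_gt x
    exact ⟨m, hm⟩
  have htend : Tendsto (fun m : ℕ => μ (Ici (m : ℝ))) atTop (nhds 0) := by
    have := tendsto_measure_iInter_atTop (μ := μ) (s := fun m : ℕ => Ici (m : ℝ))
      (fun m => (measurableSet_Ici).nullMeasurableSet)
      (fun a b hab => Ici_subset_Ici.2 (by exact_mod_cast hab)) ⟨0, hfin _⟩
    rw [hInter] at this
    simpa [Function.comp_def] using this
  -- μ (Ici t) = 0 for t > 0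
  have hzero : ∀ t : ℝ, 0 < t → μ (Ici t) = 0 := by
    intro t ht
    have hle : ∀ m : ℕ, μ (Ici t) ≤ μ (Ici (m : ℝ)) := by
      intro m
      obtain ⟨n, hn⟩ : ∃ n : ℕ, (T j0) ^ n < t / (m + 1) :=
        exists_pow_lt_of_lt_one (div_pos ht (by positivity)) hj0
      have hmn : (m : ℝ) ≤ t / (T j0) ^ n := by
        rw [le_div_iff₀ (pow_pos (hT j0) n)]
        have h1 : (T j0) ^ n * (m + 1) < t := by
          rw [← lt_div_iff₀ (by positivity : (0:ℝ) < (m:ℝ) + 1)]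
          exact hn
        nlinarith [pow_pos (hT j0) n]
      rw [hiter t ht n]
      exact measure_mono (Ici_subset_Ici.2 hmn)
    have := ge_of_tendsto' htend hle
    exact le_antisymm this (by simp)
  -- conclude: μ (Ioi 0) = 0, contradicting μ (Ioi 0) = 1
  have hsub : Ioi (0:ℝ) ⊆ ⋃ n : ℕ, Ici (1 / (n + 1) : ℝ) := by
    intro x hx
    obtain ⟨n, hn⟩ := exists_nat_one_div_lt (show (0:ℝ) < x from hx)
    exact mem_iUnion.2 ⟨n, le_of_lt hn⟩
  have : μ (Ioi 0) = 0 := by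
    refine measure_mono_null hsub ?_
    exact measure_iUnion_null fun n => hzero _ (by positivity)
  rw [this] at hpos
  exact zero_ne_one hpos
end

section
/- (Corollary 2.2) Suppose |J| ≥ 2, all T_j > 0 and inf_{j∈J} T_j ≥ 1. If T_j = 1 for all j ∈ J, then 𝔉_T = {δ_c : c ∈ ℝ}; otherwise 𝔉_T = {δ_0} ∪ 𝔉_T^+. -/
open MeasureTheory Set

section Prod
variable {ι : Type*}

lemma myHasProd (a : ι → ℝ) (h0 : ∀ j, 0 ≤ a j) (h1 : ∀ j, a j ≤ 1) :
    HasProd a (⨅ s : Finset ι, ∏ j ∈ s, a j) := by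
  have hanti : Antitone (fun s : Finset ι => ∏ j ∈ s, a j) := by
    intro s t hst
    classical
    calc ∏ j ∈ t, a j = (∏ j ∈ t \ s, a j) * ∏ j ∈ s, a j := (Finset.prod_sdiff hst).symm
    _ ≤ 1 * ∏ j ∈ s, a j := by
        exact mul_le_mul_of_nonneg_right
          (Finset.prod_le_one (fun j _ => h0 j) (fun j _ => h1 j))
          (Finset.prod_nonneg fun j _ => h0 j)
    _ = ∏ j ∈ s, a j := one_mul _
  exact tendsto_atTop_ciInf hanti
    ⟨0, by rintro x ⟨s, rfl⟩; exact Finset.prod_nonneg fun j _ => h0 j⟩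

lemma myTprodLe (a : ι → ℝ) (h0 : ∀ j, 0 ≤ a j) (h1 : ∀ j, a j ≤ 1) (s : Finset ι) :
    ∏' j, a j ≤ ∏ j ∈ s, a j := by
  rw [(myHasProd a h0 h1).tprod_eq]
  exact ciInf_le ⟨0, by rintro x ⟨u, rfl⟩; exact Finset.prod_nonneg fun j _ => h0 j⟩ s

lemma myHasProdZero [Nonempty ι] : HasProd (fun _ : ι => (0:ℝ)) 0 := by
  rw [HasProd]
  have h : ∀ᶠ s : Finset ι in Filter.atTop, (0:ℝ) = ∏ _j ∈ s, (0:ℝ) := by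
    filter_upwards [Filter.eventually_ge_atTop {Classical.arbitrary ι}] with s hs
    exact (Finset.prod_eq_zero (hs (Finset.mem_singleton_self _)) rfl).symm
  exact Filter.Tendsto.congr' h tendsto_const_nhds

end Prod

section Meas
variable (μ : Measure ℝ) [IsProbabilityMeasure μ]

lemma myExistsLeft (t : ℝ) : ∃ s ≤ t, μ (Ici s) ≠ 0 := by
  by_contra h
  push_neg at h
  have hsub : (Set.univ : Set ℝ) ⊆ ⋃ n : ℕ, Ici (t - n) := by
    intro x _
    obtain ⟨n, hn⟩ := exists_nat_gt (t - x)
    exact mem_iUnion.2 ⟨n, by simp only [mem_Ici]; linarith⟩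
  have h1 : (1 : ENNReal) ≤ 0 := by
    calc (1 : ENNReal) = μ univ := measure_univ.symm
    _ ≤ μ (⋃ n : ℕ, Ici (t - n)) := measure_mono hsub
    _ ≤ ∑' n : ℕ, μ (Ici (t - (n:ℝ))) := measure_iUnion_le _
    _ = 0 := by
        rw [show (0:ENNReal) = ∑' _n : ℕ, (0:ENNReal) by simp]
        exact tsum_congr fun n => h _ (by linarith [Nat.cast_nonneg (α := ℝ) n])
  simp at h1

lemma myIioZero {s : ℝ} (h : μ (Ici s) = 1) : μ (Iio s) = 0 := by
  have := measure_compl (measurableSet_Ici (a := s)) (measure_ne_top μ _)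
  rw [compl_Ici, h, measure_univ] at this
  simpa using this

lemma myExistsRight : ∃ s : ℝ, μ (Ici s) ≠ 1 := by
  by_contra h
  push_neg at h
  have hsub : (Set.univ : Set ℝ) ⊆ ⋃ n : ℕ, Iio (n : ℝ) := by
    intro x _
    obtain ⟨n, hn⟩ := exists_nat_gt x
    exact mem_iUnion.2 ⟨n, hn⟩
  have h1 : (1 : ENNReal) ≤ 0 := by
    calc (1 : ENNReal) = μ univ := measure_univ.symm
    _ ≤ μ (⋃ n : ℕ, Iio (n:ℝ)) := measure_mono hsub
    _ ≤ ∑' n : ℕ, μ (Iio (n:ℝ)) := measure_iUnion_le _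
    _ = 0 := by
        rw [show (0:ENNReal) = ∑' _n : ℕ, (0:ENNReal) by simp]
        exact tsum_congr fun n => myIioZero μ (h _)
  simp at h1

lemma myBoundary {c : ℝ} (h : ∀ t < c, μ (Ici t) = 1) : μ (Ici c) = 1 := by
  have hsub : Iio c ⊆ ⋃ n : ℕ, Iio (c - 1/(n+1)) := by
    intro x hx
    obtain ⟨n, hn⟩ := exists_nat_one_div_lt (show (0:ℝ) < c - x by simpa using hx)
    exact mem_iUnion.2 ⟨n, by simp only [mem_Iio]; push_cast at hn ⊢; linarith⟩
  have h0 : μ (Iio c) = 0 := by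
    refine le_antisymm ?_ zero_le
    calc μ (Iio c) ≤ ∑' n : ℕ, μ (Iio (c - 1/(n+1))) :=
          le_trans (measure_mono hsub) (measure_iUnion_le _)
    _ = 0 := by
        rw [show (0:ENNReal) = ∑' _n : ℕ, (0:ENNReal) by simp]
        refine tsum_congr fun n => myIioZero μ (h _ ?_)
        have : (0:ℝ) < 1/(n+1) := by positivity
        linarith
  have := measure_compl (measurableSet_Iio (a := c)) (measure_ne_top μ _)
  rw [compl_Iio, h0, measure_univ] at this
  simpa using this

lemma myEqDirac (c : ℝ) (h1 : ∀ t ≤ c, μ (Ici t) = 1) (h0 : ∀ t, c < t → μ (Ici t) = 0) :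
    μ = Measure.dirac c := by
  refine Measure.ext_of_Ici μ _ fun a => ?_
  rw [Measure.dirac_apply' c measurableSet_Ici]
  rcases le_or_gt a c with h | h
  · rw [h1 a h, indicator_of_mem (by exact h) 1]; rfl
  · rw [h0 a h, indicator_of_notMem (by exact not_le.2 h) 1]

lemma myDiracIci (c t : ℝ) :
    ((Measure.dirac c) (Ici t)).toReal = if t ≤ c then 1 else 0 := by
  rw [Measure.dirac_apply' c measurableSet_Ici]
  by_cases h : t ≤ c
  · rw [indicator_of_mem (by exact h) 1, if_pos h]; rfl
  · rw [indicator_of_notMem (by exact h) 1, if_neg h]; rfl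

end Meas

/-- Pair inequality: the survival value is at most the product of two factors. -/
lemma myPair {ι : Type*} [Countable ι] (T : ι → ℝ) (μ : Measure ℝ)
    [IsProbabilityMeasure μ]
    (heq : ∀ t : ℝ, (μ (Ici t)).toReal = ∏' j, (μ (Ici (t / T j))).toReal)
    {j k : ι} (hjk : j ≠ k) (t : ℝ) :
    (μ (Ici t)).toReal ≤ (μ (Ici (t / T j))).toReal * (μ (Ici (t / T k))).toReal := by
  classical
  have h1 : ∀ i : ι, (0:ℝ) ≤ (μ (Ici (t / T i))).toReal := fun i => ENNReal.toReal_nonneg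
  have h2 : ∀ i : ι, (μ (Ici (t / T i))).toReal ≤ 1 := fun i => by
    simpa using ENNReal.toReal_mono ENNReal.one_ne_top (prob_le_one (μ := μ) (s := Ici (t / T i)))
  rw [heq t]
  have := myTprodLe _ h1 h2 ({j, k} : Finset ι)
  rwa [Finset.prod_pair hjk] at this

/-- (Corollary 2.2) Suppose `inf_j T_j ≥ 1`. If `T_j = 1` for all `j`, then
`𝔉_T = {δ_c : c ∈ ℝ}`; otherwise `𝔉_T = {δ_0} ∪ 𝔉_T^+`. -/
theorem stmt5 {ι : Type*} [Countable ι] (T : ι → ℝ)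
    (hcard : ∃ j k : ι, j ≠ k) (hT : ∀ j, 0 < T j)
    (hinf : 1 ≤ ⨅ j, T j) :
    ((∀ j, T j = 1) →
      {μ : Measure ℝ | MemFP T μ} = Set.range (fun c : ℝ => Measure.dirac c)) ∧
    ((¬ ∀ j, T j = 1) →
      {μ : Measure ℝ | MemFP T μ} =
        insert (Measure.dirac 0) {μ : Measure ℝ | MemFPpos T μ}) := by
  have hTge1 : ∀ j, 1 ≤ T j := fun j =>
    le_trans hinf (ciInf_le ⟨0, by rintro x ⟨i, rfl⟩; exact (hT i).le⟩ j)
  have hνne : Nonempty ι := ⟨hcard.choose⟩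
  constructor
  · -- all T j = 1
    intro hall
    ext μ
    simp only [mem_setOf_eq, Set.mem_range]
    constructor
    · rintro ⟨hprob, heq⟩
      haveI := hprob
      obtain ⟨j, k, hjk⟩ := hcard
      have h01 : ∀ t : ℝ, μ (Ici t) = 0 ∨ μ (Ici t) = 1 := by
        intro t
        have hp := myPair T μ heq hjk t
        rw [hall j, hall k, div_one] at hp
        set x := (μ (Ici t)).toReal with hx
        have hx0 : 0 ≤ x := ENNReal.toReal_nonneg
        have hx1 : x ≤ 1 := by
          simpa using ENNReal.toReal_mono ENNReal.one_ne_top (prob_le_one (μ := μ) (s := Ici t))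
        rcases eq_or_lt_of_le hx0 with h | h
        · left
          rcases (ENNReal.toReal_eq_zero_iff _).1 h.symm with h' | h'
          · exact h'
          · exact absurd h' (measure_ne_top μ _)
        · right
          have : (1:ℝ) ≤ x := by nlinarith
          exact (ENNReal.toReal_eq_one_iff _).1 (le_antisymm hx1 this)
      set S : Set ℝ := {t | μ (Ici t) = 1} with hS
      obtain ⟨s₀, hs₀t, hs₀⟩ := myExistsLeft μ 0
      have hs₀S : s₀ ∈ S := by
        rcases h01 s₀ with h | h
        · exact absurd h hs₀
        · exact h
      obtain ⟨s₁, hs₁⟩ := myExistsRight μ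
      have hbdd : BddAbove S := by
        refine ⟨s₁, fun t ht => ?_⟩
        by_contra hcon
        push_neg at hcon
        have : μ (Ici s₁) = 1 := le_antisymm prob_le_one
          (le_trans (le_of_eq ht.symm) (measure_mono (Ici_subset_Ici.2 hcon.le)))
        exact hs₁ this
      set c := sSup S with hc
      have hone : ∀ t ≤ c, μ (Ici t) = 1 := by
        have hlt : ∀ t < c, μ (Ici t) = 1 := by
          intro t ht
          obtain ⟨u, huS, hu⟩ := exists_lt_of_lt_csSup ⟨s₀, hs₀S⟩ ht
          exact le_antisymm prob_le_one
            (le_trans (le_of_eq huS.symm) (measure_mono (Ici_subset_Ici.2 hu.le)))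
        intro t ht
        rcases lt_or_eq_of_le ht with h | h
        · exact hlt t h
        · exact h ▸ myBoundary μ hlt
      have hzero : ∀ t, c < t → μ (Ici t) = 0 := by
        intro t ht
        rcases h01 t with h | h
        · exact h
        · exact absurd (le_csSup hbdd h) (not_le.2 ht)
      exact ⟨c, (myEqDirac μ c hone hzero).symm⟩
    · rintro ⟨c, rfl⟩
      refine ⟨inferInstance, fun t => ?_⟩
      have hdiv : ∀ j : ι, t / T j = t := fun j => by rw [hall j, div_one]
      simp only [hdiv, myDiracIci]
      by_cases h : t ≤ c
      · rw [if_pos h]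
        exact tprod_one.symm
      · rw [if_neg h]
        exact (myHasProdZero (ι := ι)).tprod_eq.symm
  · -- not all T j = 1
    intro hnall
    push_neg at hnall
    obtain ⟨k, hk⟩ := hnall
    have hk1 : 1 < T k := lt_of_le_of_ne (hTge1 k) (Ne.symm hk)
    obtain ⟨j, hjk⟩ : ∃ j : ι, j ≠ k := by
      obtain ⟨a, b, hab⟩ := hcard
      by_cases h : a = k
      · exact ⟨b, fun hbk => hab (h.trans hbk.symm)⟩
      · exact ⟨a, h⟩
    ext μ
    simp only [mem_setOf_eq, Set.mem_insert_iff]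
    constructor
    · rintro ⟨hprob, heq⟩
      haveI := hprob
      have hg1 : ∀ t : ℝ, (μ (Ici t)).toReal ≤ 1 := fun t => by
        simpa using ENNReal.toReal_mono ENNReal.one_ne_top (prob_le_one (μ := μ) (s := Ici t))
      have hmono : ∀ s t : ℝ, s ≤ t → (μ (Ici t)).toReal ≤ (μ (Ici s)).toReal := fun s t h =>
        ENNReal.toReal_mono (measure_ne_top μ _) (measure_mono (Ici_subset_Ici.2 h))
      -- Step A
      have hA : ∀ t : ℝ, t < 0 → 0 < (μ (Ici t)).toReal → μ (Ici (t / T k)) = 1 := by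
        intro t ht hpos
        have hp := myPair T μ heq hjk t
        have hjt : t ≤ t / T j := by
          rw [le_div_iff₀ (hT j)]
          nlinarith [hTge1 j]
        have hle : (μ (Ici (t / T j))).toReal ≤ (μ (Ici t)).toReal := hmono _ _ hjt
        have h2 : (μ (Ici t)).toReal ≤ (μ (Ici t)).toReal * (μ (Ici (t / T k))).toReal :=
          le_trans hp (mul_le_mul_of_nonneg_right hle ENNReal.toReal_nonneg)
        have h3 : (1:ℝ) ≤ (μ (Ici (t / T k))).toReal := by nlinarith
        exact (ENNReal.toReal_eq_one_iff _).1 (le_antisymm (hg1 _) h3)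
      -- Step B
      have hB : ∀ t : ℝ, t < 0 → μ (Ici t) = 1 := by
        intro t ht
        obtain ⟨s, hst, hs0⟩ := myExistsLeft μ t
        have hs : s < 0 := lt_of_le_of_lt hst ht
        have hgs : 0 < (μ (Ici s)).toReal := ENNReal.toReal_pos hs0 (measure_ne_top μ _)
        have hkey : ∀ n : ℕ, 0 < (μ (Ici (s / T k ^ n))).toReal ∧
            μ (Ici (s / T k ^ (n+1))) = 1 := by
          intro n
          induction n with
          | zero =>
            refine ⟨by simpa using hgs, ?_⟩
            have := hA s hs hgs
            simpa using this
          | succ n ih =>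
            have hneg : s / T k ^ (n+1) < 0 := div_neg_of_neg_of_pos hs (pow_pos (hT k) _)
            have hpos : 0 < (μ (Ici (s / T k ^ (n+1)))).toReal := by
              rw [(ENNReal.toReal_eq_one_iff _).2 ih.2]
              norm_num
            refine ⟨hpos, ?_⟩
            have := hA _ hneg hpos
            rwa [div_div, ← pow_succ] at this
        obtain ⟨n, hn⟩ := pow_unbounded_of_one_lt (s / t) hk1
        have hts : t ≤ s / T k ^ (n+1) := by
          rw [le_div_iff₀ (pow_pos (hT k) _)]
          have h2 : s / t < T k ^ (n+1) :=
            lt_of_lt_of_le hn (pow_le_pow_right₀ hk1.le (Nat.le_succ n))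
          have ht' : t ≠ 0 := ne_of_lt ht
          have h3 := mul_lt_mul_of_neg_left h2 ht
          nlinarith [h3, div_mul_cancel₀ s ht']
        refine le_antisymm prob_le_one ?_
        calc (1:ENNReal) = μ (Ici (s / T k ^ (n+1))) := (hkey n).2.symm
        _ ≤ μ (Ici t) := measure_mono (Ici_subset_Ici.2 hts)
      have hIci0 : μ (Ici 0) = 1 := myBoundary μ (fun t ht => hB t ht)
      -- q analysis
      set q := (μ (Ioi (0:ℝ))).toReal with hqdef
      have hqle : ∀ t : ℝ, 0 < t → (μ (Ici t)).toReal ≤ q * q := by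
        intro t ht
        refine le_trans (myPair T μ heq hjk t) (mul_le_mul ?_ ?_ ENNReal.toReal_nonneg
          ENNReal.toReal_nonneg)
        · exact ENNReal.toReal_mono (measure_ne_top μ _)
            (measure_mono fun x hx => lt_of_lt_of_le (div_pos ht (hT j)) hx)
        · exact ENNReal.toReal_mono (measure_ne_top μ _)
            (measure_mono fun x hx => lt_of_lt_of_le (div_pos ht (hT k)) hx)
      have hunion : Ioi (0:ℝ) = ⋃ n : ℕ, Ici (1/(n+1):ℝ) := by
        ext x
        simp only [mem_Ioi, mem_iUnion, mem_Ici]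
        constructor
        · intro hx
          obtain ⟨n, hn⟩ := exists_nat_one_div_lt hx
          exact ⟨n, by push_cast at hn ⊢; linarith⟩
        · rintro ⟨n, hn⟩
          have : (0:ℝ) < 1/(n+1) := by positivity
          linarith
      have hmon : Monotone (fun n : ℕ => Ici (1/(n+1):ℝ)) := by
        intro n m hnm
        apply Ici_subset_Ici.2
        apply one_div_le_one_div_of_le (by positivity)
        have h' : (n:ℝ) ≤ m := by exact_mod_cast hnm
        linarith
      have hsup : μ (Ioi (0:ℝ)) ≤ ENNReal.ofReal (q * q) := by
        rw [hunion, hmon.directed_le.measure_iUnion]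
        refine iSup_le fun n => ?_
        rw [ENNReal.le_ofReal_iff_toReal_le (measure_ne_top μ _) (by positivity)]
        exact hqle _ (by positivity)
      have hq2 : q ≤ q * q := by
        have := ENNReal.toReal_mono ENNReal.ofReal_ne_top hsup
        rwa [ENNReal.toReal_ofReal (by positivity)] at this
      have hq1 : q ≤ 1 := by
        simpa using ENNReal.toReal_mono ENNReal.one_ne_top (prob_le_one (μ := μ) (s := Ioi 0))
      rcases eq_or_lt_of_le (ENNReal.toReal_nonneg : (0:ℝ) ≤ q) with h | h
      · -- q = 0 : μ = dirac 0
        left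
        have hIoi0 : μ (Ioi (0:ℝ)) = 0 := by
          rcases (ENNReal.toReal_eq_zero_iff _).1 h.symm with h' | h'
          · exact h'
          · exact absurd h' (measure_ne_top μ _)
        refine myEqDirac μ 0 ?_ ?_
        · intro t ht
          rcases lt_or_eq_of_le ht with h' | h'
          · exact hB t h'
          · exact h' ▸ hIci0
        · intro t ht
          exact measure_mono_null (fun x hx => lt_of_lt_of_le ht hx) hIoi0
      · -- q = 1 : MemFPpos
        right
        have : (1:ℝ) ≤ q := by nlinarith
        exact ⟨⟨hprob, heq⟩, (ENNReal.toReal_eq_one_iff _).1 (le_antisymm hq1 this)⟩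
    · rintro (rfl | hμ)
      · refine ⟨inferInstance, fun t => ?_⟩
        simp only [myDiracIci]
        by_cases h : t ≤ 0
        · have hdiv : ∀ i : ι, t / T i ≤ 0 := fun i => div_nonpos_of_nonpos_of_nonneg h (hT i).le
          rw [if_pos h]
          have : ∀ i : ι, (if t / T i ≤ (0:ℝ) then (1:ℝ) else 0) = 1 := fun i => if_pos (hdiv i)
          simp only [this]
          exact tprod_one.symm
        · push_neg at h
          have hdiv : ∀ i : ι, ¬ (t / T i ≤ 0) := fun i => not_le.2 (div_pos h (hT i))
          rw [if_neg (not_le.2 h)]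
          have : ∀ i : ι, (if t / T i ≤ (0:ℝ) then (1:ℝ) else 0) = 0 := fun i => if_neg (hdiv i)
          simp only [this]
          exact (myHasProdZero (ι := ι)).tprod_eq.symm
      · exact hμ.1
end

section
/- (Proposition 2.3(a), case (A1)) Suppose |J| ≥ 2, all T_j > 0, inf_{j∈J} T_j ≥ 1, and at least two indices j ∈ J satisfy T_j = 1. Then 𝔉_T^+ = {δ_c : c > 0}. -/
open MeasureTheory Set
open scoped ENNReal Topology

private lemma hasProd_zero_of_zero {ι : Type*} (f : ι → ℝ) {i : ι} (hi : f i = 0) :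
    HasProd f 0 := by
  have h : ∀ᶠ s in Filter.atTop, (0 : ℝ) = ∏ k ∈ s, f k := by
    filter_upwards [Filter.eventually_ge_atTop ({i} : Finset ι)] with s hs
    exact (Finset.prod_eq_zero (hs (Finset.mem_singleton_self i)) hi).symm
  exact (tendsto_const_nhds : Filter.Tendsto (fun _ : Finset ι => (0 : ℝ)) _ _).congr' h

private lemma tprod_le_mul {ι : Type*} (f : ι → ℝ) (h0 : ∀ i, 0 ≤ f i) (h1 : ∀ i, f i ≤ 1)
    {i j : ι} (hij : i ≠ j) (hf : Multipliable f) : ∏' k, f k ≤ f i * f j := by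
  classical
  refine le_of_tendsto hf.hasProd ?_
  filter_upwards [Filter.eventually_ge_atTop ({i, j} : Finset ι)] with s hs
  have hsd : (∏ k ∈ s \ {i, j}, f k) * ∏ k ∈ ({i, j} : Finset ι), f k = ∏ k ∈ s, f k :=
    Finset.prod_sdiff hs
  have hpair : ∏ k ∈ ({i, j} : Finset ι), f k = f i * f j := Finset.prod_pair hij
  have hA : (∏ k ∈ s \ {i, j}, f k) ≤ 1 :=
    Finset.prod_le_one (fun k _ => h0 k) (fun k _ => h1 k)
  have hB : 0 ≤ f i * f j := mul_nonneg (h0 i) (h0 j)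
  calc ∏ k ∈ s, f k = (∏ k ∈ s \ {i, j}, f k) * (f i * f j) := by rw [← hpair, hsd]
    _ ≤ f i * f j := mul_le_of_le_one_left hB hA

/-- (Proposition 2.3(a), case (A1)) If `inf_j T_j ≥ 1` and at least two indices
carry the weight `1`, then `𝔉_T^+ = {δ_c : c > 0}`. -/
theorem stmt6 {ι : Type*} [Countable ι] (T : ι → ℝ)
    (hT : ∀ j, 0 < T j) (hinf : 1 ≤ ⨅ j, T j)
    (htwo : ∃ j k : ι, j ≠ k ∧ T j = 1 ∧ T k = 1) :
    {μ : Measure ℝ | MemFPpos T μ} =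
      {μ : Measure ℝ | ∃ c : ℝ, 0 < c ∧ μ = Measure.dirac c} := by
  obtain ⟨j0, k0, hjk, hj0, hk0⟩ := htwo
  have hT1 : ∀ j, 1 ≤ T j := fun j =>
    le_trans hinf (ciInf_le ⟨0, fun x hx => by obtain ⟨j, rfl⟩ := hx; exact (hT j).le⟩ j)
  ext μ
  simp only [mem_setOf_eq]
  constructor
  · rintro ⟨⟨hprob, hfp⟩, hpos⟩
    have hle1 : ∀ s : Set ℝ, μ s ≤ 1 := fun s => prob_le_one
    have hne : ∀ s : Set ℝ, μ s ≠ ⊤ := fun s => measure_ne_top μ s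
    -- the survival function takes only values 0 and 1
    have hbin : ∀ t : ℝ, μ (Ici t) = 0 ∨ μ (Ici t) = 1 := by
      intro t
      set f : ι → ℝ := fun j => (μ (Ici (t / T j))).toReal with hf
      have hfj0 : f j0 = (μ (Ici t)).toReal := by simp [hf, hj0]
      have hfk0 : f k0 = (μ (Ici t)).toReal := by simp [hf, hk0]
      have h0 : ∀ i, 0 ≤ f i := fun i => ENNReal.toReal_nonneg
      have h1 : ∀ i, f i ≤ 1 := by
        intro i
        have := ENNReal.toReal_mono (by simp) (hle1 (Ici (t / T i)))
        simpa using this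
      have hx0 : 0 ≤ (μ (Ici t)).toReal := ENNReal.toReal_nonneg
      have hx1 : (μ (Ici t)).toReal ≤ 1 := by
        have := ENNReal.toReal_mono (by simp) (hle1 (Ici t)); simpa using this
      have key : (μ (Ici t)).toReal = 0 ∨ (μ (Ici t)).toReal = 1 := by
        by_cases hm : Multipliable f
        · have hle : (μ (Ici t)).toReal ≤ (μ (Ici t)).toReal * (μ (Ici t)).toReal := by
            calc (μ (Ici t)).toReal = ∏' k, f k := hfp t
              _ ≤ f j0 * f k0 := tprod_le_mul f h0 h1 hjk hm
              _ = (μ (Ici t)).toReal * (μ (Ici t)).toReal := by rw [hfj0, hfk0]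
          set x := (μ (Ici t)).toReal
          have hz : x * (1 - x) = 0 := le_antisymm (by nlinarith) (by nlinarith)
          rcases mul_eq_zero.mp hz with h | h
          · exact Or.inl h
          · exact Or.inr (by linarith)
        · right
          rw [hfp t, tprod_eq_one_of_not_multipliable hm]
      rcases key with h | h
      · left
        rcases ENNReal.toReal_eq_zero_iff _ |>.mp h with h' | h'
        · exact h'
        · exact absurd h' (hne _)
      · right
        have := (ENNReal.toReal_eq_one_iff _).mp h
        exact this
    set S : Set ℝ := {t : ℝ | μ (Ici t) = 1} with hS
    have h0S : (0 : ℝ) ∈ S := by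
      have h1le : (1 : ℝ≥0∞) ≤ μ (Ici 0) := hpos ▸ measure_mono Ioi_subset_Ici_self
      exact le_antisymm (hle1 _) h1le
    -- S is bounded above
    have hbdd : BddAbove S := by
      by_contra hb
      have hall : ∀ t : ℝ, μ (Ici t) = 1 := by
        intro t
        obtain ⟨s, hsS, hst⟩ := not_bddAbove_iff.mp hb t
        exact le_antisymm (hle1 _) (hsS ▸ measure_mono (Ici_subset_Ici.mpr hst.le))
      have hemp : ⋂ n : ℕ, Ici ((n : ℝ)) = (∅ : Set ℝ) := by
        ext x
        simp only [mem_iInter, mem_Ici, mem_empty_iff_false, iff_false, not_forall, not_le]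
        obtain ⟨n, hn⟩ := exists_nat_gt x
        exact ⟨n, hn⟩
      have htend := tendsto_measure_iInter_atTop (μ := μ)
        (s := fun n : ℕ => Ici ((n : ℝ)))
        (fun n => (measurableSet_Ici).nullMeasurableSet)
        (fun m n hmn => Ici_subset_Ici.mpr (by exact_mod_cast hmn)) ⟨0, hne _⟩
      rw [hemp] at htend
      have htend' : Filter.Tendsto (fun _ : ℕ => (1 : ℝ≥0∞)) Filter.atTop (𝓝 (μ ∅)) := by
        refine htend.congr fun n => ?_
        simpa using hall _
      have := tendsto_nhds_unique htend' tendsto_const_nhds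
      simp at this
    set c := sSup S with hc
    have hSne : S.Nonempty := ⟨0, h0S⟩
    -- μ (Ici c) = 1
    have hIci : μ (Ici c) = 1 := by
      have hmem : ∀ n : ℕ, μ (Ici (c - 1 / (n + 1))) = 1 := by
        intro n
        have hlt : c - 1 / (n + 1) < c := by
          have : (0 : ℝ) < 1 / (n + 1) := by positivity
          linarith
        obtain ⟨s, hsS, hst⟩ := exists_lt_of_lt_csSup hSne hlt
        exact le_antisymm (hle1 _)
          (hsS ▸ measure_mono (Ici_subset_Ici.mpr hst.le) : (1:ℝ≥0∞) ≤ _)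
      have hint : ⋂ n : ℕ, Ici (c - 1 / ((n : ℝ) + 1)) = Ici c := by
        ext x
        simp only [mem_iInter, mem_Ici]
        constructor
        · intro h
          by_contra hx
          push_neg at hx
          obtain ⟨n, hn⟩ := exists_nat_one_div_lt (show (0:ℝ) < c - x by linarith)
          have := h n
          linarith
        · intro h n
          have : (0 : ℝ) < 1 / (n + 1) := by positivity
          linarith
      have htend := tendsto_measure_iInter_atTop (μ := μ)
        (s := fun n : ℕ => Ici (c - 1 / ((n : ℝ) + 1)))
        (fun n => (measurableSet_Ici).nullMeasurableSet)
        (fun m n hmn => Ici_subset_Ici.mpr (by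
          have : 1 / ((n : ℝ) + 1) ≤ 1 / ((m : ℝ) + 1) := by
            apply one_div_le_one_div_of_le (by positivity)
            exact_mod_cast Nat.add_le_add_right hmn 1
          linarith)) ⟨0, hne _⟩
      rw [hint] at htend
      have htend' : Filter.Tendsto (fun _ : ℕ => (1 : ℝ≥0∞)) Filter.atTop (𝓝 (μ (Ici c))) := by
        refine htend.congr fun n => ?_
        simpa using hmem n
      exact tendsto_nhds_unique htend' tendsto_const_nhds
    -- μ (Ioi c) = 0
    have hIoi : μ (Ioi c) = 0 := by
      have hmem : ∀ n : ℕ, μ (Ici (c + 1 / ((n : ℝ) + 1))) = 0 := by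
        intro n
        have hgt : c < c + 1 / ((n : ℝ) + 1) := by
          have : (0 : ℝ) < 1 / (n + 1) := by positivity
          linarith
        rcases hbin (c + 1 / ((n : ℝ) + 1)) with h | h
        · exact h
        · exact absurd (le_csSup hbdd h) (not_le.mpr hgt)
      have hun : Ioi c = ⋃ n : ℕ, Ici (c + 1 / ((n : ℝ) + 1)) := by
        ext x
        simp only [mem_Ioi, mem_iUnion, mem_Ici]
        constructor
        · intro h
          obtain ⟨n, hn⟩ := exists_nat_one_div_lt (show (0:ℝ) < x - c by linarith)
          exact ⟨n, by linarith⟩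
        · rintro ⟨n, hn⟩
          have : (0 : ℝ) < 1 / ((n : ℝ) + 1) := by positivity
          linarith
      rw [hun]
      refine le_antisymm (le_trans (measure_iUnion_le _) ?_) (zero_le)
      have h0 : ∑' n : ℕ, μ (Ici (c + 1 / ((n : ℝ) + 1))) = 0 := by
        simp only [hmem]; simp
      rw [h0]
    -- μ {c} = 1
    have hsing : μ {c} = 1 := by
      have hsub : Ici c ⊆ {c} ∪ Ioi c := by
        intro x hx
        rcases eq_or_lt_of_le (mem_Ici.mp hx) with h | h
        · exact Or.inl h.symm
        · exact Or.inr h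
      have h1 : (1 : ℝ≥0∞) ≤ μ {c} + μ (Ioi c) :=
        hIci ▸ le_trans (measure_mono hsub) (measure_union_le _ _)
      rw [hIoi, add_zero] at h1
      exact le_antisymm (hle1 _) h1
    have hcpos : 0 < c := by
      by_contra hc0
      push_neg at hc0
      have : μ (Ioi 0) ≤ μ (Ioi c) := measure_mono (Ioi_subset_Ioi hc0)
      rw [hpos, hIoi] at this
      simp at this
    refine ⟨c, hcpos, ?_⟩
    ext s hs
    rw [Measure.dirac_apply' c hs]
    by_cases hcs : c ∈ s
    · have h1 : (1 : ℝ≥0∞) ≤ μ s := hsing ▸ measure_mono (singleton_subset_iff.mpr hcs)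
      rw [indicator_of_mem hcs]
      exact le_antisymm (hle1 _) h1
    · have hcompl : μ {c}ᶜ = 0 := by
        have := measure_compl (measurableSet_singleton c) (hne {c})
        rw [hsing, measure_univ] at this
        simpa using this
      have h0 : μ s ≤ 0 := hcompl ▸ measure_mono (subset_compl_singleton_iff.mpr hcs)
      rw [indicator_of_notMem hcs]
      exact le_antisymm h0 (zero_le)
  · rintro ⟨c, hc, rfl⟩
    refine ⟨⟨Measure.dirac.isProbabilityMeasure, ?_⟩, ?_⟩
    · intro t
      by_cases htc : t ≤ c
      · have hmem : ∀ j, Measure.dirac c (Ici (t / T j)) = 1 := by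
          intro j
          refine Measure.dirac_apply_of_mem ?_
          simp only [mem_Ici]
          rcases le_or_gt t 0 with ht | ht
          · exact le_trans (div_nonpos_of_nonpos_of_nonneg ht (hT j).le) hc.le
          · exact le_trans (div_le_self ht.le (hT1 j)) htc
        rw [Measure.dirac_apply_of_mem (mem_Ici.mpr htc)]
        rw [tprod_congr (fun j => by rw [hmem j]; simp : ∀ j, (Measure.dirac c (Ici (t / T j))).toReal = 1)]
        simp
      · push_neg at htc
        have hL : Measure.dirac c (Ici t) = 0 := by
          rw [Measure.dirac_apply' c measurableSet_Ici]
          exact indicator_of_notMem (by simpa using htc) _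
        have hf0 : (Measure.dirac c (Ici (t / T j0))).toReal = 0 := by
          rw [hj0, div_one, Measure.dirac_apply' c measurableSet_Ici]
          rw [indicator_of_notMem (by simpa using htc)]
          simp
        rw [hL]
        simp only [ENNReal.toReal_zero]
        exact ((hasProd_zero_of_zero
          (fun j => ((Measure.dirac c) (Ici (t / T j))).toReal) hf0).tprod_eq).symm
    · exact Measure.dirac_apply_of_mem (mem_Ioi.mpr hc)
end

section
/- (Proposition 2.3(a), case (A2)) Suppose J = ℕ, all T_j > 0, inf_{j∈ℕ} T_j ≥ 1, at most one index j satisfies T_j = 1, and liminf_{j→∞} T_j = 1. Then 𝔉_T^+ = {δ_c : c > 0}. -/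
open MeasureTheory Set Filter
open scoped ENNReal Topology

lemma aux_hasProd {f : ℕ → ℝ} (h0 : ∀ j, 0 ≤ f j) (h1 : ∀ j, f j ≤ 1) :
    HasProd f (⨅ s : Finset ℕ, ∏ j ∈ s, f j) := by
  have hanti : Antitone (fun s : Finset ℕ => ∏ j ∈ s, f j) := by
    intro s t hst
    have h := Finset.prod_sdiff (f := f) hst
    simp only []
    rw [← h]
    have h1' : ∏ j ∈ t \ s, f j ≤ 1 := Finset.prod_le_one (fun j _ => h0 j) (fun j _ => h1 j)
    have h0' : 0 ≤ ∏ j ∈ s, f j := Finset.prod_nonneg (fun j _ => h0 j)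
    nlinarith [Finset.prod_nonneg (fun j (_ : j ∈ t \ s) => h0 j)]
  have hbdd : BddBelow (range fun s : Finset ℕ => ∏ j ∈ s, f j) := by
    refine ⟨0, ?_⟩
    rintro x ⟨s, rfl⟩
    exact Finset.prod_nonneg (fun j _ => h0 j)
  exact tendsto_atTop_ciInf hanti hbdd

lemma aux_tprod_le {f : ℕ → ℝ} (h0 : ∀ j, 0 ≤ f j) (h1 : ∀ j, f j ≤ 1) (s : Finset ℕ) :
    ∏' j, f j ≤ ∏ j ∈ s, f j := by
  rw [(aux_hasProd h0 h1).tprod_eq]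
  exact ciInf_le ⟨0, by rintro x ⟨t, rfl⟩; exact Finset.prod_nonneg (fun j _ => h0 j)⟩ s

lemma aux_tprod_eq_zero {f : ℕ → ℝ} (j : ℕ) (hj : f j = 0) : ∏' i, f i = 0 := by
  have h : HasProd f 0 := by
    have hev : ∀ᶠ s : Finset ℕ in atTop, ∏ i ∈ s, f i = (0:ℝ) := by
      filter_upwards [eventually_ge_atTop ({j} : Finset ℕ)] with s hs
      exact Finset.prod_eq_zero (Finset.singleton_subset_iff.mp hs) hj
    exact Tendsto.congr' (hev.mono fun s h => h.symm) tendsto_const_nhds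
  exact h.tprod_eq


/-- (Proposition 2.3(a), case (A2)) If `J = ℕ`, `inf_j T_j ≥ 1`, at most one
index carries the weight `1`, and `liminf_{j→∞} T_j = 1`, then
`𝔉_T^+ = {δ_c : c > 0}`. -/
theorem stmt7 (T : ℕ → ℝ)
    (hT : ∀ j, 0 < T j) (hinf : 1 ≤ ⨅ j, T j)
    (hone : ∀ j k : ℕ, T j = 1 → T k = 1 → j = k)
    (hliminf : Filter.liminf T Filter.atTop = 1) :
    {μ : Measure ℝ | MemFPpos T μ} =
      {μ : Measure ℝ | ∃ c : ℝ, 0 < c ∧ μ = Measure.dirac c} := by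
  have hT1 : ∀ j, 1 ≤ T j := fun j =>
    le_trans hinf (ciInf_le ⟨0, by rintro x ⟨j, rfl⟩; exact (hT j).le⟩ j)
  have hfreq : ∀ b : ℝ, 1 < b → ∀ N : ℕ, ∃ j, N ≤ j ∧ T j < b := by
    intro b hb N
    by_contra h
    push_neg at h
    have hev : b ∈ {a | ∀ᶠ n in atTop, a ≤ T n} :=
      eventually_atTop.mpr ⟨N, fun j hj => h j hj⟩
    rw [liminf_eq] at hliminf
    by_cases hbdd : BddAbove {a | ∀ᶠ n in atTop, a ≤ T n}
    · have : b ≤ sSup {a | ∀ᶠ n in atTop, a ≤ T n} := le_csSup hbdd hev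
      rw [hliminf] at this
      linarith
    · rw [Real.sSup_of_not_bddAbove hbdd] at hliminf
      norm_num at hliminf
  ext μ
  simp only [mem_setOf_eq]
  constructor
  · rintro ⟨⟨hprob, heq⟩, hpos⟩
    haveI := hprob
    have hfin : ∀ s : Set ℝ, μ s ≠ ∞ := fun s => measure_ne_top μ s
    set G : ℝ → ℝ := fun t => (μ (Ici t)).toReal with hGdef
    have hG0 : ∀ t, 0 ≤ G t := fun t => ENNReal.toReal_nonneg
    have hG1 : ∀ t, G t ≤ 1 := by
      intro t
      rw [← ENNReal.toReal_one]
      exact ENNReal.toReal_mono ENNReal.one_ne_top prob_le_one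
    have hGanti : Antitone G := fun a b hab =>
      ENNReal.toReal_mono (hfin _) (measure_mono (Ici_subset_Ici.mpr hab))
    have hleft : ∀ t : ℝ, Tendsto (fun n : ℕ => G (t - 1/(n+1))) atTop (𝓝 (G t)) := by
      intro t
      have hset : ⋂ n : ℕ, Ici (t - 1/((n:ℝ)+1)) = Ici t := by
        ext x
        simp only [mem_iInter, mem_Ici]
        constructor
        · intro h
          by_contra hx
          push_neg at hx
          obtain ⟨n, hn⟩ := exists_nat_one_div_lt (show (0:ℝ) < t - x by linarith)
          linarith [h n]
        · intro h n
          have : (0:ℝ) < 1/((n:ℝ)+1) := by positivity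
          linarith
      have hmono : Antitone (fun n : ℕ => Ici (t - 1/((n:ℝ)+1))) := by
        intro a b hab
        apply Ici_subset_Ici.mpr
        have h1 : (1:ℝ)/((b:ℝ)+1) ≤ 1/((a:ℝ)+1) := by
          apply one_div_le_one_div_of_le
          · positivity
          · have : (a:ℝ) ≤ b := Nat.cast_le.mpr hab
            linarith
        linarith
      have ht := tendsto_measure_iInter_atTop (μ := μ)
        (fun n => measurableSet_Ici.nullMeasurableSet) hmono ⟨0, hfin _⟩
      rw [hset] at ht
      exact (ENNReal.tendsto_toReal (hfin _)).comp ht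
    have hone1 : ∀ t : ℝ, t ≤ 0 → G t = 1 := by
      intro t ht
      have h1 : μ (Ici t) = 1 := le_antisymm prob_le_one
        (by rw [← hpos]; exact measure_mono (fun x hx => le_trans ht (le_of_lt hx)))
      simp [hGdef, h1]
    have G01 : ∀ t : ℝ, G t = 0 ∨ G t = 1 := by
      intro t
      rcases le_or_gt t 0 with ht | ht
      · exact Or.inr (hone1 t ht)
      have key : ∀ ε : ℝ, 0 < ε → G t ≤ (G t + ε)^2 := by
        intro ε hε
        obtain ⟨n, hn⟩ : ∃ n : ℕ, G (t - 1/((n:ℝ)+1)) < G t + ε := by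
          have h := (hleft t).eventually (eventually_lt_nhds (show G t < G t + ε by linarith))
          exact h.exists
        set u : ℝ := max (t - 1/((n:ℝ)+1)) (t/2) with hu
        have hu0 : 0 < u := lt_of_lt_of_le (by linarith) (le_max_right _ _)
        have hut : u < t := by
          apply max_lt
          · have : (0:ℝ) < 1/((n:ℝ)+1) := by positivity
            linarith
          · linarith
        have hGu : G u < G t + ε := lt_of_le_of_lt (hGanti (le_max_left _ _)) hn
        have hb : 1 < t / u := (one_lt_div hu0).mpr hut
        obtain ⟨j, _, hjb⟩ := hfreq (t/u) hb 0
        obtain ⟨k, hkj, hkb⟩ := hfreq (t/u) hb (j+1)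
        have hjk : j ≠ k := by omega
        have hprod_le : G t ≤ G (t/T j) * G (t/T k) := by
          have heqG : G t = ∏' i, G (t / T i) := heq t
          rw [heqG]
          have h := aux_tprod_le (f := fun i => G (t/T i))
            (fun i => hG0 _) (fun i => hG1 _) {j, k}
          rwa [Finset.prod_pair hjk] at h
        have hle : ∀ i, T i < t/u → G (t / T i) ≤ G u := by
          intro i hi
          apply hGanti
          rw [le_div_iff₀ (hT i)]
          have h2 := (lt_div_iff₀ hu0).mp hi
          nlinarith [hT i, hT1 i]
        have h1 := lt_of_le_of_lt (hle j hjb) hGu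
        have h2 := lt_of_le_of_lt (hle k hkb) hGu
        nlinarith [hG0 (t/T j), hG0 (t/T k), hprod_le]
      have hsq : G t ≤ (G t)^2 := by
        by_contra h
        push_neg at h
        have hd : 0 < (G t - (G t)^2)/3 := by linarith
        have hk := key _ hd
        nlinarith [hG0 t, hG1 t]
      have h01 : G t * (1 - G t) = 0 := by nlinarith [hG0 t, hG1 t]
      rcases mul_eq_zero.mp h01 with h | h
      · exact Or.inl h
      · exact Or.inr (by linarith)
    -- the set where G = 1
    have hS_ne : ({t : ℝ | G t = 1}).Nonempty := ⟨0, hone1 0 le_rfl⟩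
    have hS_bdd : BddAbove {t : ℝ | G t = 1} := by
      have hset : ⋂ n : ℕ, Ici ((n:ℝ)) = (∅ : Set ℝ) := by
        ext x
        simp only [mem_iInter, mem_Ici, mem_empty_iff_false, iff_false, not_forall, not_le]
        obtain ⟨n, hn⟩ := exists_nat_gt x
        exact ⟨n, hn⟩
      have hmono : Antitone (fun n : ℕ => Ici ((n:ℝ))) := fun a b hab =>
        Ici_subset_Ici.mpr (Nat.cast_le.mpr hab)
      have ht := tendsto_measure_iInter_atTop (μ := μ)
        (fun n => measurableSet_Ici.nullMeasurableSet) hmono ⟨0, hfin _⟩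
      rw [hset, measure_empty] at ht
      have hev : ∀ᶠ n : ℕ in atTop, μ (Ici ((n:ℝ))) < 1 :=
        ht.eventually_lt_const (by norm_num)
      obtain ⟨n, hn⟩ := hev.exists
      refine ⟨n, fun x hx => ?_⟩
      by_contra hxn
      push_neg at hxn
      have h1 : μ (Ici x) = 1 := ENNReal.toReal_eq_one_iff _ |>.mp hx
      have : μ (Ici x) ≤ μ (Ici ((n:ℝ))) := measure_mono (Ici_subset_Ici.mpr hxn.le)
      rw [h1] at this
      exact absurd (lt_of_le_of_lt this hn) (lt_irrefl _)
    set c : ℝ := sSup {t : ℝ | G t = 1} with hc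
    have hc_pos : 0 < c := by
      have hex : ∃ n : ℕ, G (1/((n:ℝ)+1)) = 1 := by
        by_contra hall
        push_neg at hall
        have hz : ∀ n : ℕ, μ (Ici (1/((n:ℝ)+1))) = 0 := by
          intro n
          have := (G01 (1/((n:ℝ)+1))).resolve_right (hall n)
          rcases ENNReal.toReal_eq_zero_iff _ |>.mp this with h | h
          · exact h
          · exact absurd h (hfin _)
        have hcover : Ioi (0:ℝ) ⊆ ⋃ n : ℕ, Ici (1/((n:ℝ)+1)) := by
          intro x hx
          obtain ⟨n, hn⟩ := exists_nat_one_div_lt (show (0:ℝ) < x from hx)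
          exact mem_iUnion.mpr ⟨n, le_of_lt hn⟩
        have hmle : μ (Ioi (0:ℝ)) ≤ μ (⋃ n : ℕ, Ici (1/((n:ℝ)+1))) := measure_mono hcover
        rw [measure_iUnion_null hz, hpos] at hmle
        simp at hmle
      obtain ⟨n, hn⟩ := hex
      have h1 : 1/((n:ℝ)+1) ≤ c := le_csSup hS_bdd hn
      have h2 : (0:ℝ) < 1/((n:ℝ)+1) := by positivity
      linarith
    refine ⟨c, hc_pos, ?_⟩
    refine Measure.ext_of_Ici μ (Measure.dirac c) (fun a => ?_)
    rcases le_or_gt a c with h | h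
    · have hlt : ∀ v : ℝ, v < a → G v = 1 := by
        intro v hv
        obtain ⟨s, hs, hvs⟩ := exists_lt_of_lt_csSup hS_ne (lt_of_lt_of_le hv h)
        have h2 := hGanti hvs.le
        rw [hs] at h2
        exact le_antisymm (hG1 v) h2
      have hev : (fun n : ℕ => G (a - 1/((n:ℝ)+1))) = fun _ => (1:ℝ) := by
        funext n
        exact hlt _ (sub_lt_self a (by positivity))
      have hGa : G a = 1 := by
        have h1 := hleft a
        rw [hev] at h1
        exact (tendsto_nhds_unique h1 tendsto_const_nhds)
      have hμ : μ (Ici a) = 1 := ENNReal.toReal_eq_one_iff _ |>.mp hGa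
      rw [hμ, Measure.dirac_apply_of_mem (show c ∈ Ici a from h)]
    · have hne : G a ≠ 1 := by
        intro h1
        exact absurd (le_csSup hS_bdd h1) (not_le.mpr h)
      have h0' : G a = 0 := (G01 a).resolve_right hne
      have hμ : μ (Ici a) = 0 := by
        rcases ENNReal.toReal_eq_zero_iff _ |>.mp h0' with hh | hh
        · exact hh
        · exact absurd hh (hfin _)
      rw [hμ, Measure.dirac_apply' _ measurableSet_Ici,
        indicator_of_notMem (by simpa using not_le.mpr h)]
  · rintro ⟨c, hc, rfl⟩
    refine ⟨⟨inferInstance, ?_⟩, ?_⟩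
    · intro t
      rcases le_or_gt t c with h | h
      · have hall : ∀ j, (Measure.dirac c (Ici (t / T j))).toReal = 1 := by
          intro j
          have hjc : t / T j ≤ c := by
            rcases le_or_gt t 0 with ht | ht
            · exact le_trans (div_nonpos_of_nonpos_of_nonneg ht (hT j).le) hc.le
            · exact le_trans (div_le_self ht.le (hT1 j)) h
          rw [Measure.dirac_apply_of_mem (show c ∈ Ici (t / T j) from hjc)]
          simp
        rw [Measure.dirac_apply_of_mem (show c ∈ Ici t from h)]
        simp only [hall]
        rw [ENNReal.toReal_one, tprod_one]
      · have hb : 1 < t / c := (one_lt_div hc).mpr h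
        obtain ⟨j, _, hjb⟩ := hfreq (t/c) hb 0
        have hjc : c < t / T j := by
          rw [lt_div_iff₀ (hT j)]
          have := (lt_div_iff₀ hc).mp hjb
          nlinarith
        have hz : (Measure.dirac c (Ici (t / T j))).toReal = 0 := by
          rw [Measure.dirac_apply' _ measurableSet_Ici,
            indicator_of_notMem (by simpa using not_le.mpr hjc)]
          simp
        rw [aux_tprod_eq_zero j hz, Measure.dirac_apply' _ measurableSet_Ici,
          indicator_of_notMem (by simpa using not_le.mpr h)]
        simp
    · exact Measure.dirac_apply_of_mem (show c ∈ Ioi 0 from hc)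
end

section
/- (Proposition 2.3(b)) Suppose |J| ≥ 2, all T_j > 0, exactly one index j ∈ J satisfies T_j = 1, and c := inf_{j∈J*} T_j > 1 where J* := {j ∈ J : T_j ≠ 1}. Then 𝔉_T^+ consists exactly of all distributions F concentrated on (0,∞) with 0 < l_F ≤ u_F < ∞ and c ≥ u_F / l_F; in particular {δ_c' : c' > 0} ⊆ 𝔉_T^+. -/
open MeasureTheory Set Filter Topology

lemma prod01_hasProd {ι : Type*} (f : ι → ℝ) (h0 : ∀ i, 0 ≤ f i) (h1 : ∀ i, f i ≤ 1) :
    HasProd f (⨅ s : Finset ι, ∏ i ∈ s, f i) := by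
  classical
  have hanti : Antitone (fun s : Finset ι => ∏ i ∈ s, f i) := by
    intro s t hst
    simp only
    rw [← Finset.prod_sdiff hst]
    calc (∏ i ∈ t \ s, f i) * ∏ i ∈ s, f i
        ≤ 1 * ∏ i ∈ s, f i := by
          exact mul_le_mul_of_nonneg_right
            (Finset.prod_le_one (fun i _ => h0 i) (fun i _ => h1 i))
            (Finset.prod_nonneg (fun i _ => h0 i))
      _ = _ := one_mul _
  exact tendsto_atTop_ciInf hanti
    ⟨0, by rintro x ⟨s, rfl⟩; exact Finset.prod_nonneg (fun i _ => h0 i)⟩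

lemma tprod01_le_prod {ι : Type*} (f : ι → ℝ) (h0 : ∀ i, 0 ≤ f i) (h1 : ∀ i, f i ≤ 1)
    (s : Finset ι) : ∏' i, f i ≤ ∏ i ∈ s, f i := by
  rw [(prod01_hasProd f h0 h1).tprod_eq]
  exact ciInf_le ⟨0, by rintro x ⟨u, rfl⟩; exact Finset.prod_nonneg (fun i _ => h0 i)⟩ s

lemma tprod_zero_of_zero {ι : Type*} (f : ι → ℝ) (j : ι) (hj : f j = 0) : ∏' i, f i = 0 := by
  classical
  have h : HasProd f 0 := by
    have he : (fun s : Finset ι => ∏ i ∈ s, f i) =ᶠ[atTop] fun _ => 0 := by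
      filter_upwards [Filter.eventually_ge_atTop ({j} : Finset ι)] with s hs
      exact Finset.prod_eq_zero (hs (Finset.mem_singleton_self j)) hj
    exact Tendsto.congr' he.symm tendsto_const_nhds
  exact h.tprod_eq

lemma meas_Iio_add_Ici (μ : Measure ℝ) [IsProbabilityMeasure μ] (t : ℝ) :
    μ (Iio t) + μ (Ici t) = 1 := by
  rw [← measure_union (Iio_disjoint_Ici le_rfl) measurableSet_Ici, Iio_union_Ici, measure_univ]

lemma meas_Iio_one_iff (μ : Measure ℝ) [IsProbabilityMeasure μ] (t : ℝ) :
    μ (Iio t) = 1 ↔ μ (Ici t) = 0 := by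
  have h := meas_Iio_add_Ici μ t
  constructor
  · intro h1
    rw [h1] at h
    exact (ENNReal.add_right_inj (by simp)).mp (h.trans (add_zero (1:ENNReal)).symm)
  · intro h0
    rw [h0, add_zero] at h
    exact h

lemma meas_Iio_zero_iff (μ : Measure ℝ) [IsProbabilityMeasure μ] (t : ℝ) :
    μ (Iio t) = 0 ↔ μ (Ici t) = 1 := by
  have h := meas_Iio_add_Ici μ t
  constructor
  · intro h0; rw [h0, zero_add] at h; exact h
  · intro h1
    rw [h1] at h
    have h' : μ (Iio t) + 1 = 0 + 1 := by rw [zero_add]; exact h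
    exact (ENNReal.add_left_inj (by simp)).mp h'

lemma meas_Iio_nonpos (μ : Measure ℝ) [IsProbabilityMeasure μ] (hpos : μ (Ioi 0) = 1)
    {t : ℝ} (ht : t ≤ 0) : μ (Iio t) = 0 := by
  have h1 : μ (Iic 0) + μ (Ioi 0) = 1 := by
    rw [← measure_union (Iic_disjoint_Ioi le_rfl) measurableSet_Ioi, Iic_union_Ioi, measure_univ]
  rw [hpos] at h1
  have h0 : μ (Iic 0) = 0 :=
    (ENNReal.add_left_inj (by simp)).mp (h1.trans (zero_add (1:ENNReal)).symm)
  exact le_antisymm ((measure_mono ((Iio_subset_Iio ht).trans Iio_subset_Iic_self)).trans_eq h0)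
    zero_le

lemma meas_Iio_csSup_zero (μ : Measure ℝ) (S : Set ℝ) (hne : S.Nonempty)
    (h0 : ∀ s ∈ S, μ (Iio s) = 0) : μ (Iio (sSup S)) = 0 := by
  have hsub : Iio (sSup S) ⊆ ⋃ n : ℕ, Iio (sSup S - ((n:ℝ)+1)⁻¹) := by
    intro x hx
    obtain ⟨n, hn⟩ := exists_nat_one_div_lt (K := ℝ) (sub_pos.mpr hx)
    refine mem_iUnion.mpr ⟨n, ?_⟩
    simp only [mem_Iio]
    rw [one_div] at hn
    linarith
  refine le_antisymm ?_ zero_le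
  calc μ (Iio (sSup S)) ≤ ∑' n : ℕ, μ (Iio (sSup S - ((n:ℝ)+1)⁻¹)) :=
        (measure_mono hsub).trans (measure_iUnion_le _)
    _ = 0 := by
        rw [ENNReal.tsum_eq_zero]
        intro n
        have hlt : sSup S - ((n:ℝ)+1)⁻¹ < sSup S := by
          have : (0:ℝ) < ((n:ℝ)+1)⁻¹ := by positivity
          linarith
        obtain ⟨s, hs, hss⟩ := exists_lt_of_lt_csSup hne hlt
        exact le_antisymm ((measure_mono (Iio_subset_Iio hss.le)).trans_eq (h0 s hs)) zero_le


/-- `l_F = sup {t ≥ 0 : F(t) = 0}`, where `F(t) = μ (-∞, t)`. -/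
noncomputable def lF (μ : Measure ℝ) : ℝ :=
  sSup {t : ℝ | 0 ≤ t ∧ μ (Iio t) = 0}

/-- `u_F = inf {t ≥ 0 : F(t) = 1}`, where `F(t) = μ (-∞, t)` (as a real number;
`u_F < ∞` is expressed by nonemptiness of the defining set). -/
noncomputable def uF (μ : Measure ℝ) : ℝ :=
  sInf {t : ℝ | 0 ≤ t ∧ μ (Iio t) = 1}

/-- (Proposition 2.3(b)) If exactly one index carries the weight `1` and
`c := inf_{j ∈ J*} T_j > 1` with `J* = {j : T_j ≠ 1}`, then `𝔉_T^+` consists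
exactly of the distributions `F` on `(0,∞)` with `0 < l_F ≤ u_F < ∞` and
`c ≥ u_F / l_F`; in particular all `δ_{c'}`, `c' > 0`, belong to `𝔉_T^+`. -/
theorem stmt8 {ι : Type*} [Countable ι] (T : ι → ℝ)
    (hcard : ∃ j k : ι, j ≠ k) (hT : ∀ j, 0 < T j)
    (hone : ∃! j : ι, T j = 1)
    (c : ℝ) (hc : c = ⨅ j : {j : ι // T j ≠ 1}, T j.1) (hc1 : 1 < c) :
    (∀ μ : Measure ℝ,
      MemFPpos T μ ↔
        (IsProbabilityMeasure μ ∧ μ (Ioi 0) = 1 ∧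
          {t : ℝ | 0 ≤ t ∧ μ (Iio t) = 1}.Nonempty ∧
          0 < lF μ ∧ lF μ ≤ uF μ ∧ uF μ / lF μ ≤ c)) ∧
    (∀ c' : ℝ, 0 < c' → MemFPpos T (Measure.dirac c')) := by
  classical
  obtain ⟨j0, hj0, hj0u⟩ := hone
  have hJstar : ∃ j1 : ι, T j1 ≠ 1 := by
    obtain ⟨j, k, hjk⟩ := hcard
    by_cases h : T j = 1
    · exact ⟨k, fun hk => hjk ((hj0u j h).trans (hj0u k hk).symm)⟩
    · exact ⟨j, h⟩
  obtain ⟨j1, hj1⟩ := hJstar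
  haveI : Nonempty {j : ι // T j ≠ 1} := ⟨⟨j1, hj1⟩⟩
  have hcle : ∀ j, T j ≠ 1 → c ≤ T j := by
    intro j hj
    rw [hc]
    have hb : BddBelow (Set.range fun k : {k : ι // T k ≠ 1} => T k.1) := by
      refine ⟨0, ?_⟩
      rintro x ⟨k, rfl⟩
      exact (hT k.1).le
    exact ciInf_le hb ⟨j, hj⟩
  have hc0 : (0:ℝ) < c := lt_trans one_pos hc1
  have main : ∀ μ : Measure ℝ,
      MemFPpos T μ ↔
        (IsProbabilityMeasure μ ∧ μ (Ioi 0) = 1 ∧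
          {t : ℝ | 0 ≤ t ∧ μ (Iio t) = 1}.Nonempty ∧
          0 < lF μ ∧ lF μ ≤ uF μ ∧ uF μ / lF μ ≤ c) := by
    intro μ
    have hlF_def : lF μ = sSup {t : ℝ | 0 ≤ t ∧ μ (Iio t) = 0} := rfl
    have huF_def : uF μ = sInf {t : ℝ | 0 ≤ t ∧ μ (Iio t) = 1} := rfl
    constructor
    · rintro ⟨⟨hprob, heq⟩, hpos⟩
      haveI := hprob
      have hIio0 : μ (Iio 0) = 0 := meas_Iio_nonpos μ hpos le_rfl
      have h0S0 : (0:ℝ) ∈ {t : ℝ | 0 ≤ t ∧ μ (Iio t) = 0} := ⟨le_rfl, hIio0⟩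
      -- key consequence of the fixed point equation
      have key : ∀ t : ℝ, μ (Iio t) ≠ 1 → ∀ j, T j ≠ 1 → μ (Iio (t / T j)) = 0 := by
        intro t ht j hj
        have hFpos : 0 < (μ (Ici t)).toReal := by
          refine ENNReal.toReal_pos ?_ (measure_ne_top μ _)
          intro h0
          exact ht ((meas_Iio_one_iff μ t).mpr h0)
        set f : ι → ℝ := fun j => (μ (Ici (t / T j))).toReal with hf
        have hf0 : ∀ i, 0 ≤ f i := fun i => ENNReal.toReal_nonneg
        have hf1 : ∀ i, f i ≤ 1 := by
          intro i
          have := ENNReal.toReal_mono (b := (1:ENNReal)) (by simp)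
            (prob_le_one (μ := μ) (s := Ici (t / T i)))
          simpa using this
        have hjne : j0 ≠ j := fun h => hj (h ▸ hj0)
        have hfj0 : f j0 = (μ (Ici t)).toReal := by
          rw [hf]; simp [hj0]
        have hle : (μ (Ici t)).toReal ≤ (μ (Ici t)).toReal * f j := by
          have h2 := tprod01_le_prod f hf0 hf1 {j0, j}
          rw [Finset.prod_pair hjne] at h2
          calc (μ (Ici t)).toReal = ∏' i, f i := heq t
            _ ≤ f j0 * f j := h2
            _ = (μ (Ici t)).toReal * f j := by rw [hfj0]
        have h1le : (1:ℝ) ≤ f j := (le_mul_iff_one_le_right hFpos).mp hle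
        have hfj : f j = 1 := le_antisymm (hf1 j) h1le
        have : μ (Ici (t / T j)) = 1 := (ENNReal.toReal_eq_one_iff _).mp hfj
        exact (meas_Iio_zero_iff μ _).mpr this
      -- Step 1 : S1 nonempty
      have hS1 : {t : ℝ | 0 ≤ t ∧ μ (Iio t) = 1}.Nonempty := by
        by_contra hS1e
        have hall : ∀ s : ℝ, 0 ≤ s → μ (Iio s) = 0 := by
          intro s hs
          have ht : μ (Iio (s * T j1)) ≠ 1 := fun h =>
            hS1e ⟨s * T j1, mul_nonneg hs (hT j1).le, h⟩
          have := key (s * T j1) ht j1 hj1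
          rwa [mul_div_cancel_right₀ _ (ne_of_gt (hT j1))] at this
        have hcontra : (1:ENNReal) ≤ 0 := by
          calc (1:ENNReal) = μ univ := measure_univ.symm
            _ ≤ ∑' n : ℕ, μ (Iio (n:ℝ)) := by
                refine (measure_mono ?_).trans (measure_iUnion_le _)
                intro x _
                obtain ⟨n, hn⟩ := exists_nat_gt x
                exact mem_iUnion.mpr ⟨n, hn⟩
            _ = 0 := by
                rw [ENNReal.tsum_eq_zero]
                intro n
                exact hall n (Nat.cast_nonneg n)
        simp at hcontra
      obtain ⟨w, hw0, hw1⟩ := hS1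
      have hub : ∀ v ∈ {t : ℝ | 0 ≤ t ∧ μ (Iio t) = 1},
          v ∈ upperBounds {t : ℝ | 0 ≤ t ∧ μ (Iio t) = 0} := by
        rintro v ⟨hv0, hv1⟩ s ⟨hs0, hs1⟩
        by_contra hlt
        push_neg at hlt
        have hmono : μ (Iio v) ≤ μ (Iio s) := measure_mono (Iio_subset_Iio hlt.le)
        rw [hv1, hs1] at hmono
        simp at hmono
      have hbddS0 : BddAbove {t : ℝ | 0 ≤ t ∧ μ (Iio t) = 0} := ⟨w, hub w ⟨hw0, hw1⟩⟩
      have hS0ne : {t : ℝ | 0 ≤ t ∧ μ (Iio t) = 0}.Nonempty := ⟨0, h0S0⟩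
      have hl0 : 0 ≤ lF μ := by rw [hlF_def]; exact le_csSup hbddS0 h0S0
      have hlu : lF μ ≤ uF μ := by
        rw [hlF_def, huF_def]
        exact le_csInf ⟨w, hw0, hw1⟩ (fun v hv => csSup_le hS0ne (hub v hv))
      have hmem : ∀ t : ℝ, 0 ≤ t → μ (Iio t) ≠ 1 → ∀ j, T j ≠ 1 → t ≤ lF μ * T j := by
        intro t ht0 ht j hj
        have h := key t ht j hj
        have hle : t / T j ≤ lF μ := by
          rw [hlF_def]
          exact le_csSup hbddS0 ⟨div_nonneg ht0 (hT j).le, h⟩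
        rwa [div_le_iff₀ (hT j)] at hle
      have hlpos : 0 < lF μ := by
        rcases lt_or_eq_of_le hl0 with h | h
        · exact h
        · exfalso
          have hall : ∀ t : ℝ, 0 < t → μ (Ici t) = 0 := by
            intro t ht
            by_contra hne
            have ht1 : μ (Iio t) ≠ 1 := fun h1 => hne ((meas_Iio_one_iff μ t).mp h1)
            have hmm := hmem t ht.le ht1 j1 hj1
            rw [← h, zero_mul] at hmm
            linarith
          have hcontra : (1:ENNReal) ≤ 0 := by
            calc (1:ENNReal) = μ (Ioi 0) := hpos.symm
              _ ≤ ∑' n : ℕ, μ (Ici ((n:ℝ)+1)⁻¹) := by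
                  refine (measure_mono ?_).trans (measure_iUnion_le _)
                  intro x hx
                  obtain ⟨n, hn⟩ := exists_nat_one_div_lt (K := ℝ) hx
                  rw [one_div] at hn
                  exact mem_iUnion.mpr ⟨n, hn.le⟩
              _ = 0 := by
                  rw [ENNReal.tsum_eq_zero]
                  intro n
                  exact hall _ (by positivity)
          simp at hcontra
      have hucl : uF μ ≤ c * lF μ := by
        by_contra hlt
        push_neg at hlt
        set t := (c * lF μ + uF μ) / 2 with htdef
        have hclpos : 0 < c * lF μ := mul_pos hc0 hlpos
        have ht0 : 0 ≤ t := by rw [htdef]; linarith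
        have htu : t < uF μ := by rw [htdef]; linarith
        have htc : c * lF μ < t := by rw [htdef]; linarith
        have ht1 : μ (Iio t) ≠ 1 := by
          intro h1
          have : uF μ ≤ t := by
            rw [huF_def]
            exact csInf_le ⟨0, fun v hv => hv.1⟩ ⟨ht0, h1⟩
          linarith
        have htc2 : t / lF μ ≤ c := by
          rw [hc]
          refine le_ciInf ?_
          intro j
          have hmm := hmem t ht0 ht1 j.1 j.2
          rw [div_le_iff₀ hlpos]
          linarith
        rw [div_le_iff₀ hlpos] at htc2
        linarith
      exact ⟨hprob, hpos, ⟨w, hw0, hw1⟩, hlpos, hlu, (div_le_iff₀ hlpos).mpr hucl⟩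
    · rintro ⟨hprob, hpos, hS1ne, hlpos, hlu, hdiv⟩
      haveI := hprob
      have hucl : uF μ ≤ c * lF μ := by rw [← div_le_iff₀ hlpos]; exact hdiv
      have hIio0 : μ (Iio 0) = 0 := meas_Iio_nonpos μ hpos le_rfl
      have h0S0 : (0:ℝ) ∈ {t : ℝ | 0 ≤ t ∧ μ (Iio t) = 0} := ⟨le_rfl, hIio0⟩
      have hS0ne : {t : ℝ | 0 ≤ t ∧ μ (Iio t) = 0}.Nonempty := ⟨0, h0S0⟩
      have hIiol : μ (Iio (lF μ)) = 0 := by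
        rw [hlF_def]
        exact meas_Iio_csSup_zero μ _ hS0ne (fun s hs => hs.2)
      refine ⟨⟨hprob, ?_⟩, hpos⟩
      intro t
      by_cases ht : μ (Iio t) = 1
      · have hIci : μ (Ici t) = 0 := (meas_Iio_one_iff μ t).mp ht
        rw [hIci]
        symm
        refine tprod_zero_of_zero _ j0 ?_
        rw [hj0, div_one, hIci]
        simp
      · have htu : t ≤ uF μ := by
          by_contra h
          push_neg at h
          rw [huF_def] at h
          obtain ⟨s, hs, hst⟩ := exists_lt_of_csInf_lt hS1ne h
          have hmono : μ (Iio s) ≤ μ (Iio t) := measure_mono (Iio_subset_Iio hst.le)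
          rw [hs.2] at hmono
          exact ht (le_antisymm prob_le_one hmono)
        symm
        refine (tprod_eq_mulSingle j0 ?_).trans ?_
        · intro j hj
          have hjne : T j ≠ 1 := fun h => hj (hj0u j h)
          have hcj : c ≤ T j := hcle j hjne
          have hdl : t / T j ≤ lF μ := by
            rw [div_le_iff₀ (hT j)]
            calc t ≤ uF μ := htu
              _ ≤ c * lF μ := hucl
              _ ≤ T j * lF μ := mul_le_mul_of_nonneg_right hcj hlpos.le
              _ = lF μ * T j := mul_comm _ _
          have h0 : μ (Iio (t / T j)) = 0 :=
            le_antisymm ((measure_mono (Iio_subset_Iio hdl)).trans_eq hIiol) zero_le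
          rw [(meas_Iio_zero_iff μ _).mp h0]
          simp
        · rw [hj0, div_one]
  refine ⟨main, ?_⟩
  intro c' hc'
  rw [main]
  have hIoi : (Measure.dirac c' : Measure ℝ) (Ioi 0) = 1 := Measure.dirac_apply_of_mem hc'
  have hS1eq : {t : ℝ | 0 ≤ t ∧ (Measure.dirac c' : Measure ℝ) (Iio t) = 1} = Ioi c' := by
    ext t
    simp only [mem_setOf_eq, mem_Ioi]
    rw [Measure.dirac_apply' _ measurableSet_Iio]
    constructor
    · rintro ⟨-, h⟩
      by_contra hcon
      push_neg at hcon
      rw [indicator_of_notMem (fun hm => absurd (mem_Iio.mp hm) (not_lt.mpr hcon))] at h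
      simp at h
    · intro h
      refine ⟨(hc'.trans h).le, ?_⟩
      rw [indicator_of_mem (mem_Iio.mpr h)]
      rfl
  have hS0eq : {t : ℝ | 0 ≤ t ∧ (Measure.dirac c' : Measure ℝ) (Iio t) = 0} = Icc 0 c' := by
    ext t
    simp only [mem_setOf_eq, mem_Icc]
    rw [Measure.dirac_apply' _ measurableSet_Iio]
    constructor
    · rintro ⟨h0, h⟩
      refine ⟨h0, ?_⟩
      by_contra hcon
      push_neg at hcon
      rw [indicator_of_mem (mem_Iio.mpr hcon)] at h
      simp at h
    · rintro ⟨h0, h⟩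
      exact ⟨h0, by
        rw [indicator_of_notMem (fun hm => absurd (mem_Iio.mp hm) (not_lt.mpr h))]⟩
  have hlFd : lF (Measure.dirac c') = c' := by
    show sSup {t : ℝ | 0 ≤ t ∧ (Measure.dirac c' : Measure ℝ) (Iio t) = 0} = c'
    rw [hS0eq]
    exact csSup_Icc hc'.le
  have huFd : uF (Measure.dirac c') = c' := by
    show sInf {t : ℝ | 0 ≤ t ∧ (Measure.dirac c' : Measure ℝ) (Iio t) = 1} = c'
    rw [hS1eq]
    exact csInf_Ioi
  refine ⟨inferInstance, hIoi, ?_, ?_, ?_, ?_⟩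
  · rw [hS1eq]; exact nonempty_Ioi
  · rw [hlFd]; exact hc'
  · rw [hlFd, huFd]
  · rw [hlFd, huFd, div_self (ne_of_gt hc')]; exact hc1.le
end

section
/- (Proposition 2.3(c)) Suppose J = ℕ, all T_j > 0, inf_{j∈ℕ} T_j > 1 and liminf_{j→∞} T_j < ∞. Then 𝔉_T^+ = ∅. -/
open MeasureTheory Set Filter

lemma tprod_le_finset_prod {f : ℕ → ℝ} (h0 : ∀ j, 0 ≤ f j) (h1 : ∀ j, f j ≤ 1)
    (hm : Multipliable f) (s : Finset ℕ) : ∏' j, f j ≤ ∏ j ∈ s, f j := by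
  refine le_of_tendsto hm.hasProd ?_
  filter_upwards [Filter.eventually_ge_atTop s] with u hu
  rw [← Finset.prod_sdiff hu]
  have h2 : ∏ j ∈ u \ s, f j ≤ 1 := Finset.prod_le_one (fun j _ => h0 j) (fun j _ => h1 j)
  have h3 : (0:ℝ) ≤ ∏ j ∈ s, f j := Finset.prod_nonneg (fun j _ => h0 j)
  exact mul_le_of_le_one_left h3 h2

/-- (Proposition 2.3(c)) If `J = ℕ`, `inf_j T_j > 1` and `liminf_{j→∞} T_j < ∞`,
then `𝔉_T^+ = ∅`. -/
theorem stmt9 (T : ℕ → ℝ)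
    (hT : ∀ j, 0 < T j) (hinf : 1 < ⨅ j, T j)
    (hliminf : Filter.liminf (fun j => (T j : EReal)) Filter.atTop < ⊤) :
    ∀ μ : Measure ℝ, ¬ MemFPpos T μ := by
  intro μ hμ
  obtain ⟨⟨hprob, hFP⟩, hpos⟩ := hμ
  set F : ℝ → ℝ := fun t => (μ (Ici t)).toReal with hF
  have hfin : ∀ s : Set ℝ, μ s ≠ ⊤ := fun s => (measure_lt_top μ s).ne
  have hle1 : ∀ t, F t ≤ 1 := by
    intro t
    have : μ (Ici t) ≤ 1 := prob_le_one
    simpa [hF] using ENNReal.toReal_mono (by simp) this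
  have h0F : ∀ t, 0 ≤ F t := fun t => ENNReal.toReal_nonneg
  have hanti : ∀ {s t : ℝ}, s ≤ t → F t ≤ F s := by
    intro s t hst
    exact ENNReal.toReal_mono (hfin _) (measure_mono (Ici_subset_Ici.mpr hst))
  set a := ⨅ j, T j with ha
  have haT : ∀ j, a ≤ T j := fun j =>
    ciInf_le ⟨0, fun x ⟨j, hj⟩ => hj ▸ (hT j).le⟩ j
  -- extract C with infinitely many T j < C
  obtain ⟨C', hC'1, hC'2⟩ := exists_between hliminf
  have hfreqE : ∃ᶠ j in atTop, (T j : EReal) < C' := frequently_lt_of_liminf_lt (by isBoundedDefault) hC'1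
  obtain ⟨j0, hj0⟩ := hfreqE.exists
  have hC'bot : C' ≠ ⊥ := fun h => by simp [h] at hj0
  set C : ℝ := C'.toReal with hC
  have hCC : (C : EReal) = C' := EReal.coe_toReal hC'2.ne hC'bot
  have hfreq : ∃ᶠ j in atTop, T j < C := by
    refine hfreqE.mono fun j h => ?_
    rw [← hCC] at h
    exact_mod_cast h
  have hinfset : {j : ℕ | T j < C}.Infinite := Nat.frequently_atTop_iff_infinite.mp hfreq
  have hC1 : 1 < C := lt_of_lt_of_le hinf ((haT j0).trans (by
    have := hj0; rw [← hCC] at this; exact_mod_cast this.le))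
  have hC0 : 0 < C := lt_trans one_pos hC1
  -- Step A
  have stepA : ∀ t : ℝ, 0 < t → 0 < F t → F (t / C) = 1 := by
    intro t ht hFt
    by_contra hne
    have hq : F (t / C) < 1 := lt_of_le_of_ne (hle1 _) hne
    have hq0 : 0 ≤ F (t / C) := h0F _
    have hkey : ∀ n : ℕ, F t ≤ F (t / C) ^ n := by
      intro n
      obtain ⟨s, hs_sub, hs_card⟩ := hinfset.exists_subset_card_eq n
      have hfle : ∀ j ∈ s, F (t / T j) ≤ F (t / C) := by
        intro j hj
        have hTjC : T j < C := hs_sub hj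
        have : t / C ≤ t / T j := by gcongr <;> first | exact ht.le | exact hT j | exact hTjC.le
        exact hanti this
      by_cases hm : Multipliable (fun j => F (t / T j))
      · calc F t = ∏' j, F (t / T j) := hFP t
          _ ≤ ∏ j ∈ s, F (t / T j) :=
              tprod_le_finset_prod (fun j => h0F _) (fun j => hle1 _) hm s
          _ ≤ ∏ _j ∈ s, F (t / C) := Finset.prod_le_prod (fun j _ => h0F _) hfle
          _ = F (t / C) ^ n := by rw [Finset.prod_const, hs_card]
      · exfalso
        have h1 : F t = 1 := (hFP t).trans (tprod_eq_one_of_not_multipliable hm)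
        have h2 : t / C ≤ t := div_le_self ht.le hC1.le
        have := hanti h2
        rw [h1] at this
        linarith
    have h0' : F t ≤ 0 :=
      ge_of_tendsto' (tendsto_pow_atTop_nhds_zero_of_lt_one hq0 hq) hkey
    linarith
  -- Step B
  set b : ℝ := (1 + a) / 2 with hb
  have hb1 : 1 < b := by simp only [hb]; linarith
  have hba : b < a := by simp only [hb]; linarith
  have hb0 : 0 < b := lt_trans one_pos hb1
  have stepB : ∀ u : ℝ, 0 < u → F u = 1 → F (b * u) = 1 := by
    intro u hu hFu
    have hone : ∀ j, F (b * u / T j) = 1 := by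
      intro j
      have h1 : b * u / T j ≤ u := by
        rw [div_le_iff₀ (hT j)]
        have : b * u ≤ a * u := by nlinarith
        nlinarith [mul_le_mul_of_nonneg_right (haT j) hu.le]
      refine le_antisymm (hle1 _) ?_
      rw [← hFu]
      exact hanti h1
    calc F (b * u) = ∏' j, F (b * u / T j) := hFP (b * u)
      _ = ∏' (_j : ℕ), (1:ℝ) := tprod_congr hone
      _ = 1 := tprod_one
  -- existence of t0 with F t0 < 1
  have ht0 : ∃ t0 : ℝ, F t0 < 1 := by
    by_contra h
    push_neg at h
    have hIci : ∀ t : ℝ, μ (Ici t) = 1 := by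
      intro t
      exact (ENNReal.toReal_eq_one_iff _).mp (le_antisymm (hle1 t) (h t))
    have hIio : ∀ n : ℕ, μ (Iio (n : ℝ)) = 0 := by
      intro n
      have := measure_compl (measurableSet_Ici (a := (n:ℝ))) (hfin _)
      rw [compl_Ici, hIci n, measure_univ] at this
      simpa using this
    have huniv : (⋃ n : ℕ, Iio (n : ℝ)) = univ := by
      refine eq_univ_iff_forall.mpr fun x => ?_
      obtain ⟨n, hn⟩ := exists_nat_gt x
      exact mem_iUnion.mpr ⟨n, hn⟩
    have := measure_iUnion_null hIio
    rw [huniv, measure_univ] at this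
    exact one_ne_zero this
  obtain ⟨t0, ht0⟩ := ht0
  -- starting point
  have hstart : ∃ t : ℝ, 0 < t ∧ 0 < F t := by
    by_contra h
    push_neg at h
    have hz : ∀ n : ℕ, μ (Ici (1 / ((n:ℝ) + 1))) = 0 := by
      intro n
      have hp : (0:ℝ) < 1 / ((n:ℝ) + 1) := by positivity
      have hle := h _ hp
      have h0 : F (1 / ((n:ℝ) + 1)) = 0 := le_antisymm hle (h0F _)
      exact ((ENNReal.toReal_eq_zero_iff _).mp h0).resolve_right (hfin _)
    have hsub : Ioi (0:ℝ) ⊆ ⋃ n : ℕ, Ici (1 / ((n:ℝ) + 1)) := by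
      intro x hx
      obtain ⟨n, hn⟩ := exists_nat_one_div_lt (mem_Ioi.mp hx)
      exact mem_iUnion.mpr ⟨n, hn.le⟩
    have : μ (Ioi (0:ℝ)) = 0 :=
      le_antisymm ((measure_mono hsub).trans (measure_iUnion_null hz).le) zero_le
    rw [hpos] at this
    exact one_ne_zero this
  obtain ⟨t, ht, hFt⟩ := hstart
  have hu : 0 < t / C := div_pos ht hC0
  have hFu : F (t / C) = 1 := stepA t ht hFt
  have hiter : ∀ n : ℕ, F (b ^ n * (t / C)) = 1 := by
    intro n
    induction n with
    | zero => simpa using hFu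
    | succ n ih =>
        have hpos' : 0 < b ^ n * (t / C) := by positivity
        have := stepB _ hpos' ih
        rw [pow_succ]
        convert this using 2
        ring
  obtain ⟨n, hn⟩ := pow_unbounded_of_one_lt (t0 / (t / C)) hb1
  have hgt : t0 ≤ b ^ n * (t / C) := by
    rw [div_lt_iff₀ hu] at hn
    linarith
  have := hanti hgt
  rw [hiter n] at this
  linarith
end

section
/- (Lemma 3.1, first part) Suppose |J| ≥ 2, all T_j > 0 and inf_{j∈J} T_j > 1 (with, in case J = ℕ, either J finite or lim_{j→∞} T_j = ∞; in fact the proof only uses inf_{j∈J} T_j > 1). Then every F ∈ 𝔉_T^+ satisfies l_F = 0, i.e. F(t) > 0 for every t > 0. -/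
open MeasureTheory Set

/-- (Lemma 3.1, first part) If `inf_j T_j > 1`, then every `F ∈ 𝔉_T^+`
satisfies `l_F = 0`, i.e. `F(t) > 0` for every `t > 0`. -/
theorem stmt10 {ι : Type*} [Countable ι] (T : ι → ℝ)
    (hcard : ∃ j k : ι, j ≠ k) (hT : ∀ j, 0 < T j)
    (hinf : 1 < ⨅ j, T j) :
    ∀ μ : Measure ℝ, MemFPpos T μ →
      lF μ = 0 ∧ ∀ t : ℝ, 0 < t → 0 < μ (Iio t) := by
  intro μ hμ
  obtain ⟨⟨hprob, hfix⟩, hpos⟩ := hμ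
  haveI := hprob
  obtain ⟨j0, _, _⟩ := hcard
  haveI : Nonempty ι := ⟨j0⟩
  set c := ⨅ j, T j with hc
  have hbdd : BddBelow (Set.range T) := ⟨0, by rintro x ⟨j, rfl⟩; exact (hT j).le⟩
  have hcle : ∀ j, c ≤ T j := fun j => ciInf_le hbdd j
  have hc1 : (1 : ℝ) < c := hinf
  have hc0 : (0 : ℝ) < c := lt_trans one_pos hc1
  -- main claim
  have key : ∀ t : ℝ, 0 < t → μ (Iio t) ≠ 0 := by
    intro t ht h0
    have step : ∀ s : ℝ, 0 < s → μ (Iio s) = 0 → μ (Iio (s * c)) = 0 := by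
      intro s hs hs0
      have hIci : μ (Ici s) = 1 := by
        have hcompl := measure_compl (measurableSet_Iio (a := s)) (measure_ne_top μ _)
        rw [compl_Iio] at hcompl
        rw [hcompl, hs0, measure_univ, tsub_zero]
      have hterm : ∀ j, (μ (Ici (s * c / T j))).toReal = 1 := by
        intro j
        have hle : s * c / T j ≤ s := by
          rw [div_le_iff₀ (hT j)]
          exact mul_le_mul_of_nonneg_left (hcle j) hs.le
        have h1 : μ (Ici s) ≤ μ (Ici (s * c / T j)) :=
          measure_mono (Ici_subset_Ici.mpr hle)
        have h2 : μ (Ici (s * c / T j)) ≤ 1 := prob_le_one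
        have : μ (Ici (s * c / T j)) = 1 := le_antisymm h2 (hIci ▸ h1)
        rw [this, ENNReal.toReal_one]
      have hfx := hfix (s * c)
      rw [tprod_congr hterm, tprod_one] at hfx
      have hne : μ (Ici (s * c)) ≠ ⊤ := measure_ne_top μ _
      have hone : μ (Ici (s * c)) = 1 := by
        rw [← ENNReal.ofReal_toReal hne, hfx]; simp
      have hcompl := measure_compl (measurableSet_Ici (a := s * c)) (measure_ne_top μ _)
      rw [compl_Ici] at hcompl
      rw [hcompl, hone, measure_univ, tsub_self]
    have iter : ∀ n : ℕ, μ (Iio (t * c ^ n)) = 0 := by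
      intro n
      induction n with
      | zero => simpa using h0
      | succ n ih =>
        have := step (t * c ^ n) (by positivity) ih
        rwa [mul_assoc, ← pow_succ] at this
    have all : ∀ s : ℝ, μ (Iio s) = 0 := by
      intro s
      obtain ⟨n, hn⟩ := pow_unbounded_of_one_lt (s / t) hc1
      have hsn : s ≤ t * c ^ n := by
        have := (div_lt_iff₀ ht).mp hn
        nlinarith
      exact measure_mono_null (Iio_subset_Iio hsn) (iter n)
    have huniv : (⋃ n : ℕ, Iio ((n : ℝ))) = univ := by
      apply eq_univ_iff_forall.mpr
      intro x
      obtain ⟨n, hn⟩ := exists_nat_gt x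
      exact mem_iUnion.mpr ⟨n, hn⟩
    have : μ univ = 0 := by
      rw [← huniv]
      exact measure_iUnion_null fun n => all n
    rw [measure_univ] at this
    exact one_ne_zero this
  have hIio0 : μ (Iio 0) = 0 := by
    have hcompl := measure_compl (measurableSet_Ioi (a := (0 : ℝ))) (measure_ne_top μ _)
    rw [hpos, measure_univ, tsub_self] at hcompl
    refine measure_mono_null ?_ hcompl
    intro x hx
    simp only [mem_compl_iff, mem_Ioi, not_lt]
    exact le_of_lt hx
  constructor
  · have hset : {t : ℝ | 0 ≤ t ∧ μ (Iio t) = 0} = {0} := by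
      ext t
      simp only [mem_setOf_eq, mem_singleton_iff]
      constructor
      · rintro ⟨h0le, hμ0⟩
        rcases h0le.lt_or_eq with h | h
        · exact absurd hμ0 (key t h)
        · exact h.symm
      · rintro rfl
        exact ⟨le_refl _, hIio0⟩
    rw [lF, hset, csSup_singleton]
  · intro t ht
    exact pos_iff_ne_zero.mpr (key t ht)
end

section
/- (Lemma 3.1, second part) Suppose J is finite with |J| ≥ 2, all T_j > 0 and inf_{j∈J} T_j > 1. Then every F ∈ 𝔉_T^+ satisfies u_F = ∞, i.e. F̄(t) > 0 for every t > 0. -/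
open MeasureTheory Set

/-- (Lemma 3.1, second part) If `J` is finite with `|J| ≥ 2` and
`inf_j T_j > 1`, then every `F ∈ 𝔉_T^+` satisfies `u_F = ∞`, i.e.
`{t ≥ 0 : F(t) = 1} = ∅`, equivalently `F̄(t) > 0` for every `t > 0`. -/
theorem stmt11 {ι : Type*} [Fintype ι] (T : ι → ℝ)
    (hcard : ∃ j k : ι, j ≠ k) (hT : ∀ j, 0 < T j)
    (hinf : 1 < ⨅ j, T j) :
    ∀ μ : Measure ℝ, MemFPpos T μ →
      {t : ℝ | 0 ≤ t ∧ μ (Iio t) = 1} = ∅ ∧ ∀ t : ℝ, 0 < t → 0 < μ (Ici t) := by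

  obtain ⟨j0, _k0, _hjk⟩ := hcard
  haveI : Nonempty ι := ⟨j0⟩
  intro μ hμ
  obtain ⟨⟨hprob, heq⟩, hpos⟩ := hμ
  haveI := hprob
  set c := ⨅ j, T j with hc
  have hcT : ∀ j, c ≤ T j := fun j => ciInf_le (Finite.bddBelow_range T) j
  have hc1 : 1 < c := hinf
  have key : ∀ t : ℝ, 0 < t → 0 < μ (Ici t) := by
    by_contra h
    push_neg at h
    obtain ⟨t₀, ht₀, ht₀0⟩ := h
    have ht₀0' : μ (Ici t₀) = 0 := le_antisymm ht₀0 zero_le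
    have hε : ∃ ε, 0 < ε ∧ 0 < μ (Ici ε) := by
      by_contra h'
      push_neg at h'
      have hall : ∀ n : ℕ, μ (Ici (1/((n:ℝ)+1))) = 0 := fun n =>
        le_antisymm (h' _ (by positivity)) zero_le
      have hsub : Ioi (0:ℝ) ⊆ ⋃ n : ℕ, Ici (1/((n:ℝ)+1)) := by
        intro x hx
        obtain ⟨n, hn⟩ := exists_nat_one_div_lt (mem_Ioi.mp hx)
        exact mem_iUnion.mpr ⟨n, hn.le⟩
      have hle := (measure_mono hsub).trans (measure_iUnion_le (μ := μ) fun n : ℕ => Ici (1/((n:ℝ)+1)))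
      rw [hpos] at hle
      simp only [one_div] at hall
      simp [hall] at hle
    obtain ⟨ε, hε0, hεpos⟩ := hε
    set S := {t : ℝ | 0 < μ (Ici t)} with hS
    have hSne : S.Nonempty := ⟨ε, hεpos⟩
    have hSbdd : BddAbove S := by
      refine ⟨t₀, fun s hs => ?_⟩
      by_contra hst
      push_neg at hst
      have : μ (Ici s) ≤ μ (Ici t₀) := measure_mono (Ici_subset_Ici.mpr hst.le)
      rw [ht₀0'] at this
      exact absurd (le_antisymm this zero_le) hs.ne'
    set u := sSup S with hu
    have hu0 : 0 < u := lt_of_lt_of_le hε0 (le_csSup hSbdd hεpos)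
    set t := u * ((1 + c)/2) with htdef
    have ht_gt : u < t := by nlinarith
    have ht0 : 0 < t := hu0.trans ht_gt
    have htc : t / c < u := by
      rw [div_lt_iff₀ (by linarith : (0:ℝ) < c)]
      nlinarith
    have hfac : ∀ j, 0 < μ (Ici (t / T j)) := by
      intro j
      have h1 : t / T j ≤ t / c := by
        apply div_le_div_of_nonneg_left ht0.le (by linarith) (hcT j)
      have h2 : t / T j < u := lt_of_le_of_lt h1 htc
      obtain ⟨s, hsS, hs⟩ := exists_lt_of_lt_csSup hSne h2
      exact lt_of_lt_of_le hsS (measure_mono (Ici_subset_Ici.mpr hs.le))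
    have hprodpos : 0 < (μ (Ici t)).toReal := by
      rw [heq t, tprod_fintype]
      exact Finset.prod_pos fun j _ =>
        ENNReal.toReal_pos (hfac j).ne' (measure_ne_top μ _)
    have htS : t ∈ S := by
      rw [hS, mem_setOf_eq, pos_iff_ne_zero]
      intro h0
      rw [h0] at hprodpos
      simp at hprodpos
    exact absurd (le_csSup hSbdd htS) (not_le.mpr ht_gt)
  refine ⟨?_, key⟩
  ext t
  simp only [mem_setOf_eq, mem_empty_iff_false, iff_false, not_and]
  intro ht0 hμt
  rcases ht0.lt_or_eq with ht | ht
  · have hcompl : μ (Ici t) = 0 := by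
      have := measure_compl (measurableSet_Iio (a := t)) (measure_ne_top μ _)
      rw [compl_Iio, hμt, measure_univ] at this
      simpa using this
    exact absurd hcompl (key t ht).ne'
  · subst ht
    have hdisj : Disjoint (Iio (0:ℝ)) (Ioi 0) := disjoint_left.mpr fun x hx hx' => lt_asymm (mem_Iio.mp hx) (mem_Ioi.mp hx')
    have hun := measure_union (μ := μ) hdisj measurableSet_Ioi
    have hle : μ (Iio (0:ℝ) ∪ Ioi 0) ≤ 1 := by
      rw [← measure_univ (μ := μ)]; exact measure_mono (subset_univ _)
    rw [hun, hμt, hpos] at hle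
    norm_num at hle
end

section
/- (Theorem 5.1(b)) Let J = ℕ and T_j < 0 for all j ∈ ℕ. Then 𝔉_T = {δ_0}, i.e. the Dirac measure at 0 is the only fixed point. -/
open MeasureTheory Set

/-- `μ ∈ 𝔉_T` for a family of negative weights `T` indexed by `ℕ`: the fixed
point equation `W =d inf_j T_j W_j` reads `F̄(t) = ∏_j F((t/T_j)+)`, i.e.
`μ [t, ∞) = ∏_j μ (-∞, t/T_j]` in terms of the measure `μ`. -/
def MemFPNeg (T : ℕ → ℝ) (μ : Measure ℝ) : Prop :=
  IsProbabilityMeasure μ ∧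
    ∀ t : ℝ, (μ (Ici t)).toReal = ∏' j, (μ (Iic (t / T j))).toReal

lemma tprod_const_zero {c : ℝ} (h0 : 0 ≤ c) (h1 : c < 1) : ∏' (_ : ℕ), c = 0 := by
  have hcard : Filter.Tendsto (fun s : Finset ℕ => s.card) Filter.atTop Filter.atTop := by
    apply Filter.tendsto_atTop.2
    intro b
    filter_upwards [Filter.eventually_ge_atTop (Finset.range b)] with s hs
    simpa using Finset.card_le_card hs
  have hpow : Filter.Tendsto (fun n : ℕ => c ^ n) Filter.atTop (nhds 0) :=
    tendsto_pow_atTop_nhds_zero_of_lt_one h0 h1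
  have hp : HasProd (fun _ : ℕ => c) 0 := by
    have := hpow.comp hcard
    simpa [HasProd, Finset.prod_const, Function.comp_def] using this
  exact hp.tprod_eq

lemma dirac_memFPNeg (T : ℕ → ℝ) (hT : ∀ j, T j < 0) : MemFPNeg T (Measure.dirac 0) := by
  refine ⟨inferInstance, fun t => ?_⟩
  rcases le_or_gt t 0 with ht | ht
  · have h1 : (Measure.dirac (0:ℝ)) (Ici t) = 1 :=
      Measure.dirac_apply_of_mem ht
    have h2 : ∀ j, (Measure.dirac (0:ℝ)) (Iic (t / T j)) = 1 := fun j =>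
      Measure.dirac_apply_of_mem ((div_nonneg_iff.2 (Or.inr ⟨ht, (hT j).le⟩)))
    simp [h1, h2]
  · have h1 : (Measure.dirac (0:ℝ)) (Ici t) = 0 := by
      rw [Measure.dirac_apply]
      simp [Set.indicator, not_le.2 ht]
    have h2 : ∀ j, (Measure.dirac (0:ℝ)) (Iic (t / T j)) = 0 := by
      intro j
      rw [Measure.dirac_apply]
      simp [Set.indicator, not_le.2 (div_neg_of_pos_of_neg ht (hT j))]
    rw [h1]
    simp only [h2, ENNReal.toReal_zero]
    rw [tprod_const_zero le_rfl one_pos]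

/-- (Theorem 5.1(b)) If `J = ℕ` and all `T_j < 0`, then `𝔉_T = {δ_0}`. -/
theorem stmt18 (T : ℕ → ℝ) (hT : ∀ j, T j < 0) :
    {μ : Measure ℝ | MemFPNeg T μ} = {Measure.dirac 0} := by
  ext μ
  simp only [mem_setOf_eq, mem_singleton_iff]
  constructor
  · rintro ⟨hprob, heq⟩
    have hfin : ∀ s : Set ℝ, μ s ≠ ⊤ := fun s => (measure_lt_top μ s).ne
    -- the equation at t = 0
    have h0 : (μ (Ici (0:ℝ))).toReal = ∏' _ : ℕ, (μ (Iic (0:ℝ))).toReal := by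
      have := heq 0
      simpa [zero_div] using this
    set c : ℝ := (μ (Iic (0:ℝ))).toReal with hc
    have hc0 : 0 ≤ c := ENNReal.toReal_nonneg
    have hc1 : c ≤ 1 := by
      rw [hc]
      exact ENNReal.toReal_le_of_le_ofReal one_pos.le (by simpa using prob_le_one)
    have hcc : c = 1 := by
      by_contra hne
      have hlt : c < 1 := lt_of_le_of_ne hc1 hne
      have hz : (μ (Ici (0:ℝ))).toReal = 0 := by
        rw [h0, tprod_const_zero hc0 hlt]
      have hz' : μ (Ici (0:ℝ)) = 0 := by
        rcases (ENNReal.toReal_eq_zero_iff _).1 hz with h | h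
        · exact h
        · exact absurd h (hfin _)
      have hio : μ (Iio (0:ℝ)) = 1 := by
        have : μ (Iio (0:ℝ)) + μ (Ici (0:ℝ)) = 1 := by
          rw [← measure_union (Iio_disjoint_Ici le_rfl) measurableSet_Ici,
            Iio_union_Ici, measure_univ]
        simpa [hz'] using this
      have : μ (Iic (0:ℝ)) = 1 := by
        have hle : μ (Iio (0:ℝ)) ≤ μ (Iic (0:ℝ)) := measure_mono Iio_subset_Iic_self
        have hle' : μ (Iic (0:ℝ)) ≤ 1 := prob_le_one
        rw [hio] at hle
        exact le_antisymm hle' hle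
      rw [hc, this] at hne
      simp at hne
    -- so μ (Iic 0) = 1 and then μ (Ici 0) = 1
    have hiic : μ (Iic (0:ℝ)) = 1 := by
      have := (ENNReal.toReal_eq_one_iff _).1 hcc
      exact this
    have hici : μ (Ici (0:ℝ)) = 1 := by
      have : (μ (Ici (0:ℝ))).toReal = 1 := by rw [h0]; simp [hcc]
      exact (ENNReal.toReal_eq_one_iff _).1 this
    have hioi : μ (Ioi (0:ℝ)) = 0 := by
      rw [← Set.compl_Iic, measure_compl measurableSet_Iic (hfin _), hiic,
        measure_univ, tsub_self]
    have hiio : μ (Iio (0:ℝ)) = 0 := by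
      rw [← Set.compl_Ici, measure_compl measurableSet_Ici (hfin _), hici,
        measure_univ, tsub_self]
    have hcompl : μ ({(0:ℝ)}ᶜ) = 0 := by
      have hsub : ({(0:ℝ)}ᶜ : Set ℝ) ⊆ Iio 0 ∪ Ioi 0 := by
        intro x hx
        rcases lt_trichotomy x 0 with h | h | h
        · exact Or.inl h
        · exact absurd h hx
        · exact Or.inr h
      have := measure_mono (μ := μ) hsub
      have hle : μ (Iio (0:ℝ) ∪ Ioi 0) ≤ 0 := by
        calc μ (Iio (0:ℝ) ∪ Ioi 0) ≤ μ (Iio (0:ℝ)) + μ (Ioi 0) := measure_union_le _ _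
        _ = 0 := by rw [hiio, hioi, add_zero]
      exact le_antisymm (le_trans this hle) zero_le
    have hsing : μ {(0:ℝ)} = 1 := by
      have : μ {(0:ℝ)} + μ ({(0:ℝ)}ᶜ) = 1 := by
        rw [measure_add_measure_compl (measurableSet_singleton 0), measure_univ]
      simpa [hcompl] using this
    ext s hs
    rcases em ((0:ℝ) ∈ s) with h0s | h0s
    · have h1 : μ s = 1 := by
        have hle1 : μ s ≤ 1 := prob_le_one
        have : μ {(0:ℝ)} ≤ μ s := measure_mono (singleton_subset_iff.2 h0s)
        rw [hsing] at this
        exact le_antisymm hle1 this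
      rw [h1, Measure.dirac_apply_of_mem h0s]
    · have h1 : μ s = 0 := by
        have hsub : s ⊆ {(0:ℝ)}ᶜ := fun x hx => by
          intro hx0
          exact h0s (hx0 ▸ hx)
        exact le_antisymm (le_trans (measure_mono hsub) hcompl.le) zero_le
      rw [h1, Measure.dirac_apply' _ hs]
      simp [Set.indicator, h0s]
  · rintro rfl
    exact dirac_memFPNeg T hT
end
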